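/- arXiv:1001.3175 — 4 statements merged into one kernel-verified Lean document; each statement's English description precedes it below -/
import Mathlib

section
/- Let P be a graded poset of odd rank such that every proper interval of P is Eulerian. Then P is Eulerian. -/
open scoped Classical

/-! ## Basic notions: saturated chains, rank functions, Euler–Poincaré, Eulerian,
binomial / Sheffer / triangular posets. -/

/-- A saturated (maximal) chain from `x` to `y` in a poset, encoded as a list. -/
def IsSatChain {α : Type*} [PartialOrder α] (x y : α) (l : List α) : Prop :=
  l.Chain' (· ⋖ ·) ∧ l.head? = some x ∧ l.getLast? = some y

/-- The number of maximal chains of the interval `[x, y]`. -/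
noncomputable def chainCount {α : Type*} [PartialOrder α] (x y : α) : ℕ :=
  Nat.card {l : List α // IsSatChain x y l}

/-- `rk` is a rank function for a graded poset with `⊥`:
the bottom has rank `0` and ranks increase by one across cover relations. -/
def IsRankFunction {α : Type*} [PartialOrder α] [OrderBot α] (rk : α → ℕ) : Prop :=
  rk ⊥ = 0 ∧ ∀ x y : α, x ⋖ y → rk y = rk x + 1

/-- The interval `[x, y]` satisfies the Euler–Poincaré relation: it has as many elements
of even rank as of odd rank. -/
def EulerPoincare {α : Type*} [Fintype α] [PartialOrder α] (rk : α → ℕ) (x y : α) : Prop :=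
  (Finset.univ.filter fun z => x ≤ z ∧ z ≤ y ∧ Even (rk z)).card =
    (Finset.univ.filter fun z => x ≤ z ∧ z ≤ y ∧ ¬ Even (rk z)).card

/-- A graded poset is Eulerian if every non-singleton interval satisfies
the Euler–Poincaré relation. -/
def IsEulerian {α : Type*} [Fintype α] [PartialOrder α] (rk : α → ℕ) : Prop :=
  ∀ x y : α, x < y → EulerPoincare rk x y

/-- A binomial poset: the number of maximal chains of an interval depends only
on its length, via the factorial function `B`. -/
def IsBinomial {α : Type*} [PartialOrder α] (rk : α → ℕ) (B : ℕ → ℕ) : Prop :=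
  ∀ x y : α, x ≤ y → chainCount x y = B (rk y - rk x)

/-- A Sheffer poset: Sheffer intervals `[⊥, y]` have `D (ρ y)` maximal chains and binomial
intervals `[x, y]` with `x ≠ ⊥` have `B (ρ y - ρ x)` maximal chains. -/
def IsSheffer {α : Type*} [PartialOrder α] [OrderBot α] (rk : α → ℕ) (B D : ℕ → ℕ) : Prop :=
  (∀ y : α, chainCount ⊥ y = D (rk y)) ∧
    (∀ x y : α, x ≠ ⊥ → x ≤ y → chainCount x y = B (rk y - rk x))

/-- A triangular poset: the number of maximal chains of `[x, y]` depends only on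
`ρ x` and `ρ y`. -/
def IsTriangular {α : Type*} [PartialOrder α] (rk : α → ℕ) (B : ℕ → ℕ → ℕ) : Prop :=
  ∀ x y : α, x ≤ y → chainCount x y = B (rk x) (rk y)

/-! ## Constructions: summations, dual suspension, butterfly posets, polygon face lattices. -/

/-- The proper part of a bounded poset. -/
abbrev ProperPart (Q : Type*) [PartialOrder Q] [OrderBot Q] [OrderTop Q] : Type _ :=
  {x : Q // x ≠ ⊥ ∧ x ≠ ⊤}

/-- The summation `⊞_{i} Q i` of a family of bounded posets: identify all the minimal
elements and all the maximal elements of the disjoint union of the `Q i`. -/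
abbrev FamSum {ι : Type*} (Q : ι → Type*) [∀ i, PartialOrder (Q i)] [∀ i, OrderBot (Q i)]
    [∀ i, OrderTop (Q i)] : Type _ :=
  WithBot (WithTop ((i : ι) × ProperPart (Q i)))

/-- The `k`-summation `⊞^k Q`: identify all the minimal elements and all the maximal
elements of `k` disjoint copies of `Q`. -/
abbrev KSum (k : ℕ) (Q : Type*) [PartialOrder Q] [OrderBot Q] [OrderTop Q] : Type _ :=
  FamSum (fun _ : Fin k => Q)

/-- The rank function of a `k`-summation, induced by a rank function on `Q`. -/
def ksumRk {k : ℕ} {Q : Type*} [PartialOrder Q] [OrderBot Q] [OrderTop Q] (rk : Q → ℕ) :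
    KSum k Q → ℕ :=
  WithBot.recBotCoe 0 (WithTop.recTopCoe (rk ⊤) (fun s => rk s.2.1))

/-- The underlying type of the dual suspension minus its bottom: two new atoms together
with the proper (non-bottom) part of `P`. -/
def DSuspMid (P : Type*) [PartialOrder P] [OrderBot P] : Type _ :=
  Fin 2 ⊕ {x : P // x ≠ ⊥}

instance DSuspMid.partialOrder (P : Type*) [PartialOrder P] [OrderBot P] :
    PartialOrder (DSuspMid P) where
  le a b :=
    match a, b with
    | .inl i, .inl j => i = j
    | .inl _, .inr _ => True
    | .inr _, .inl _ => False
    | .inr x, .inr y => x ≤ y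
  le_refl a := by cases a with
    | inl i => exact rfl
    | inr x => exact le_refl x.1
  le_trans a b c hab hbc := by
    cases a with
    | inl i =>
      cases c with
      | inl k =>
        cases b with
        | inl j => exact Eq.trans (hab : i = j) (hbc : j = k)
        | inr y => exact ((hbc : False)).elim
      | inr z => trivial
    | inr x =>
      cases b with
      | inl j => exact ((hab : False)).elim
      | inr y =>
        cases c with
        | inl k => exact ((hbc : False)).elim
        | inr z => exact le_trans (α := {x : P // x ≠ ⊥}) hab hbc
  le_antisymm a b hab hba := by
    cases a with
    | inl i =>
      cases b with
      | inl j => exact congrArg Sum.inl (hab : _ = _)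
      | inr y => exact ((hba : False)).elim
    | inr x =>
      cases b with
      | inl j => exact ((hab : False)).elim
      | inr y => exact congrArg Sum.inr (le_antisymm (α := {x : P // x ≠ ⊥}) hab hba)

/-- The dual suspension `Σ*(P)`: insert two new elements between `⊥` and the atoms of `P`. -/
abbrev DSusp (P : Type*) [PartialOrder P] [OrderBot P] : Type _ :=
  WithBot (DSuspMid P)

/-- The rank function of the dual suspension induced by a rank function on `P`. -/
def dsuspRk {P : Type*} [PartialOrder P] [OrderBot P] (rk : P → ℕ) : DSusp P → ℕ :=
  WithBot.recBotCoe 0 (Sum.elim (fun _ => 1) (fun x => rk x.1 + 1))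

noncomputable instance DSuspMid.fintype (P : Type*) [PartialOrder P] [OrderBot P] [Fintype P] :
    Fintype (DSuspMid P) := by
  unfold DSuspMid; infer_instance

instance DSuspMid.orderTop (P : Type*) [PartialOrder P] [OrderBot P] [OrderTop P] [Nontrivial P] :
    OrderTop (DSuspMid P) where
  top := Sum.inr ⟨⊤, fun h => by
    rcases exists_pair_ne P with ⟨a, b, hab⟩
    have ha : a = ⊤ := le_antisymm le_top (h.le.trans bot_le)
    have hb : b = ⊤ := le_antisymm le_top (h.le.trans bot_le)
    exact hab (ha.trans hb.symm)⟩
  le_top a := by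
    cases a with
    | inl i => trivial
    | inr x => exact le_top (α := P) (a := x.1)

/-- The butterfly poset `T n` of rank `n`: a `⊥`, a `⊤`, and two elements at each rank
`1, …, n - 1`; any two elements at consecutive ranks are comparable. -/
def Butterfly (n : ℕ) : Type :=
  {p : Fin (n + 1) × Fin 2 // ((p.1 : ℕ) = 0 ∨ (p.1 : ℕ) = n) → p.2 = 0}

namespace Butterfly

instance (n : ℕ) : PartialOrder (Butterfly n) where
  le p q := p = q ∨ (p.1.1 : ℕ) < (q.1.1 : ℕ)
  le_refl p := Or.inl rfl
  le_trans p q r h₁ h₂ := by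
    rcases h₁ with rfl | h₁
    · exact h₂
    · rcases h₂ with rfl | h₂
      · exact Or.inr h₁
      · exact Or.inr (h₁.trans h₂)
  le_antisymm p q h₁ h₂ := by
    rcases h₁ with rfl | h₁
    · rfl
    · rcases h₂ with rfl | h₂
      · rfl
      · exact absurd (h₁.trans h₂) (lt_irrefl _)

instance (n : ℕ) : OrderBot (Butterfly n) where
  bot := ⟨(0, 0), fun _ => rfl⟩
  bot_le p := by
    rcases Nat.eq_zero_or_pos (p.1.1 : ℕ) with h | h
    · left
      apply Subtype.ext
      have h2 : p.1.2 = 0 := p.2 (Or.inl (by exact_mod_cast h))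
      apply Prod.ext
      · exact (Fin.ext (by simpa using h.symm))
      · exact h2.symm
    · exact Or.inr (by simpa using h)

instance (n : ℕ) : OrderTop (Butterfly n) where
  top := ⟨(Fin.last n, 0), fun _ => rfl⟩
  le_top p := by
    rcases eq_or_lt_of_le (Nat.lt_succ_iff.mp p.1.1.isLt) with h | h
    · left
      apply Subtype.ext
      have h2 : p.1.2 = 0 := p.2 (Or.inr h)
      apply Prod.ext
      · exact (Fin.ext (by simpa using h))
      · exact h2
    · exact Or.inr (by simpa using h)

instance (n : ℕ) : Fintype (Butterfly n) := by
  unfold Butterfly; exact Subtype.fintype _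

/-- The rank function of the butterfly poset. -/
def rk {n : ℕ} (p : Butterfly n) : ℕ := p.1.1

end Butterfly

/-- The middle levels (vertices and edges) of the face lattice of a `q`-gon:
`(0, i)` is the `i`-th vertex and `(1, i)` is the edge joining vertices `i` and `i + 1`. -/
def PolyMid (q : ℕ) : Type := Fin 2 × Fin q

instance PolyMid.partialOrder (q : ℕ) : PartialOrder (PolyMid q) where
  le a b := a = b ∨ (a.1 = 0 ∧ b.1 = 1 ∧ (a.2 = b.2 ∨ (a.2 : ℕ) = ((b.2 : ℕ) + 1) % q))
  le_refl a := Or.inl rfl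
  le_trans a b c h₁ h₂ := by
    rcases h₁ with rfl | h₁
    · exact h₂
    · rcases h₂ with rfl | h₂
      · exact Or.inr h₁
      · obtain ⟨hb, _⟩ := h₂
        rw [h₁.2.1] at hb
        exact absurd hb (by decide)
  le_antisymm a b h₁ h₂ := by
    rcases h₁ with rfl | h₁
    · rfl
    · rcases h₂ with rfl | h₂
      · rfl
      · obtain ⟨hb, _⟩ := h₂
        rw [h₁.2.1] at hb
        exact absurd hb (by decide)

/-- The face lattice `P_q` of a `q`-gon. -/
abbrev PolygonFaceLattice (q : ℕ) : Type := WithBot (WithTop (PolyMid q))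

noncomputable instance ProperPart.fintype (Q : Type*) [Fintype Q] [PartialOrder Q]
    [OrderBot Q] [OrderTop Q] : Fintype (ProperPart Q) :=
  Subtype.fintype _

instance WithTop.instFintypeOfFintype {X : Type*} [Fintype X] : Fintype (WithTop X) :=
  inferInstanceAs (Fintype (Option X))

instance WithBot.instFintypeOfFintype {X : Type*} [Fintype X] : Fintype (WithBot X) :=
  inferInstanceAs (Fintype (Option X))


open Finset in

private lemma ep_iff_sum {α : Type*} [Fintype α] [PartialOrder α] (rk : α → ℕ) (x y : α) :
    EulerPoincare rk x y ↔
      ∑ z ∈ univ.filter (fun z => x ≤ z ∧ z ≤ y), (-1 : ℤ)^(rk z) = 0 := by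
  classical
  set S := univ.filter (fun z : α => x ≤ z ∧ z ≤ y) with hS
  have hsum : ∑ z ∈ S, (-1:ℤ)^(rk z)
      = ((S.filter fun z => Even (rk z)).card : ℤ)
        - ((S.filter fun z => ¬ Even (rk z)).card : ℤ) := by
    rw [← Finset.sum_filter_add_sum_filter_not S (fun z => Even (rk z))]
    rw [Finset.sum_congr rfl (fun z hz => (Finset.mem_filter.mp hz).2.neg_one_pow),
        Finset.sum_congr rfl
          (fun z hz => (Nat.not_even_iff_odd.mp (Finset.mem_filter.mp hz).2).neg_one_pow)]
    simp [sub_eq_add_neg]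
  have h1 : S.filter (fun z => Even (rk z))
      = univ.filter (fun z => x ≤ z ∧ z ≤ y ∧ Even (rk z)) := by
    rw [hS, Finset.filter_filter]
    apply Finset.filter_congr
    intro z _
    tauto
  have h2 : S.filter (fun z => ¬ Even (rk z))
      = univ.filter (fun z => x ≤ z ∧ z ≤ y ∧ ¬ Even (rk z)) := by
    rw [hS, Finset.filter_filter]
    apply Finset.filter_congr
    intro z _
    tauto
  rw [EulerPoincare, hsum, h1, h2, sub_eq_zero]
  exact ⟨fun h => by exact_mod_cast h, fun h => by exact_mod_cast h⟩

/-- A graded poset of odd rank all of whose proper intervals are Eulerian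
is itself Eulerian. -/
theorem statement0 {α : Type*} [Fintype α] [PartialOrder α] [BoundedOrder α]
    (rk : α → ℕ) (hrk : IsRankFunction rk) (hodd : Odd (rk ⊤))
    (h : ∀ x y : α, x < y → ¬(x = ⊥ ∧ y = ⊤) → EulerPoincare rk x y) :
    IsEulerian rk := by
  classical
  have hbt : (⊥ : α) ≠ ⊤ := by
    intro he
    have h0 : rk (⊤ : α) = 0 := he ▸ hrk.1
    rw [h0] at hodd
    exact (Nat.not_odd_iff_even.mpr Even.zero) hodd
  have hbotpow : (-1:ℤ)^(rk (⊥:α)) = 1 := by rw [hrk.1]; simp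
  have htoppow : (-1:ℤ)^(rk (⊤:α)) = -1 := Odd.neg_one_pow hodd
  set E := ∑ z ∈ Finset.univ.filter (fun z : α => ⊥ ≤ z ∧ z ≤ ⊤), (-1:ℤ)^(rk z) with hE
  have hEself : ∀ w : α,
      ∑ z ∈ Finset.univ.filter (fun z => w ≤ z ∧ z ≤ w), (-1:ℤ)^(rk z) = (-1)^(rk w) := by
    intro w
    have hfw : Finset.univ.filter (fun z : α => w ≤ z ∧ z ≤ w) = {w} := by
      ext z
      simp only [Finset.mem_filter, Finset.mem_univ, true_and, Finset.mem_singleton]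
      constructor
      · rintro ⟨h1, h2⟩; exact le_antisymm h2 h1
      · rintro rfl; exact ⟨le_rfl, le_rfl⟩
    rw [hfw, Finset.sum_singleton]
  have hmidT : ∀ x : α, x ≠ ⊥ → x ≠ ⊤ →
      ∑ z ∈ Finset.univ.filter (fun z => x ≤ z ∧ z ≤ ⊤), (-1:ℤ)^(rk z) = 0 := by
    intro x hb ht
    exact (ep_iff_sum rk x ⊤).mp (h x ⊤ (lt_of_le_of_ne le_top ht) (fun hc => hb hc.1))
  have hmidB : ∀ z : α, z ≠ ⊥ → z ≠ ⊤ →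
      ∑ x ∈ Finset.univ.filter (fun x => (⊥:α) ≤ x ∧ x ≤ z), (-1:ℤ)^(rk x) = 0 := by
    intro z hb ht
    exact (ep_iff_sum rk ⊥ z).mp
      (h ⊥ z (bot_lt_iff_ne_bot.mpr hb) (fun hc => ht hc.2))
  have key : ∑ x : α, (-1:ℤ)^(rk x) *
        ∑ z ∈ Finset.univ.filter (fun z => x ≤ z ∧ z ≤ ⊤), (-1:ℤ)^(rk z)
      = ∑ z : α, (-1:ℤ)^(rk z) *
        ∑ x ∈ Finset.univ.filter (fun x => (⊥:α) ≤ x ∧ x ≤ z), (-1:ℤ)^(rk x) := by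
    simp_rw [Finset.mul_sum, Finset.sum_filter]
    rw [Finset.sum_comm]
    refine Finset.sum_congr rfl fun z _ => Finset.sum_congr rfl fun x _ => ?_
    simp only [le_top, and_true, bot_le, true_and]
    by_cases hxz : x ≤ z
    · simp [hxz, mul_comm]
    · simp [hxz]
  have hL : ∑ x : α, (-1:ℤ)^(rk x) *
        ∑ z ∈ Finset.univ.filter (fun z => x ≤ z ∧ z ≤ ⊤), (-1:ℤ)^(rk z) = E + 1 := by
    rw [← Finset.sum_subset (Finset.subset_univ ({⊥, ⊤} : Finset α))
      (fun x _ hx => by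
        simp only [Finset.mem_insert, Finset.mem_singleton, not_or] at hx
        rw [hmidT x hx.1 hx.2, mul_zero])]
    rw [Finset.sum_pair hbt, hbotpow, htoppow, hEself, htoppow]
    ring
  have hR : ∑ z : α, (-1:ℤ)^(rk z) *
        ∑ x ∈ Finset.univ.filter (fun x => (⊥:α) ≤ x ∧ x ≤ z), (-1:ℤ)^(rk x) = 1 - E := by
    rw [← Finset.sum_subset (Finset.subset_univ ({⊥, ⊤} : Finset α))
      (fun z _ hz => by
        simp only [Finset.mem_insert, Finset.mem_singleton, not_or] at hz
        rw [hmidB z hz.1 hz.2, mul_zero])]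
    rw [Finset.sum_pair hbt, hbotpow, htoppow, hEself, hbotpow]
    ring
  have hE0 : E = 0 := by
    have := key
    rw [hL, hR] at this
    linarith
  intro x y hxy
  by_cases hp : x = ⊥ ∧ y = ⊤
  · obtain ⟨rfl, rfl⟩ := hp
    exact (ep_iff_sum rk ⊥ ⊤).mpr hE0
  · exact h x y hxy hp
end

section
/- Let P be an Eulerian binomial poset of rank 3. Then B(2)=2 and B(3)=2q for some integer q ≥ 2, and P is obtained by identifying all minimal elements and all maximal elements of face lattices P_{q_1}, …, P_{q_r} of q_i-gons with q_i ≥ 2 and q_1+…+q_r = q. -/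
open scoped Classical

/-- The face lattice `P_q` of a `q`-gon. -/
abbrev PolygonFL (q : ℕ) : Type := WithBot (WithTop (PolyMid q))

/-! ## Auxiliary development -/

namespace St2Aux

section Chains

variable {α : Type*} [PartialOrder α]

lemma satChain_rank [OrderBot α] {rk : α → ℕ} (hrk : IsRankFunction rk) :
    ∀ {l : List α} {x y : α}, IsSatChain x y l → rk y + 1 = rk x + l.length := by
  intro l
  induction l with
  | nil => intro x y h; simp [IsSatChain] at h
  | cons a t ih =>
    intro x y h
    obtain ⟨hc, hh, hl⟩ := h
    have hax : a = x := by simpa using hh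
    subst hax
    cases t with
    | nil =>
      have hay : a = y := by simpa using hl
      subst hay; simp
    | cons b t' =>
      unfold List.Chain' at hc; rw [List.isChain_cons_cons] at hc
      have hlast : (b :: t').getLast? = some y := by
        simpa [List.getLast?_cons_cons] using hl
      have h1 := ih (x := b) (y := y) ⟨hc.2, rfl, hlast⟩
      have hb := hrk.2 a b hc.1
      simp only [List.length_cons] at h1 ⊢
      omega

lemma isSatChain_self_iff [OrderBot α] {rk : α → ℕ} (hrk : IsRankFunction rk)
    {x : α} {l : List α} : IsSatChain x x l ↔ l = [x] := by
  constructor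
  · intro h
    have hr := satChain_rank hrk h
    have hlen : l.length = 1 := by omega
    obtain ⟨a, rfl⟩ := List.length_eq_one_iff.mp hlen
    have : a = x := by simpa using h.2.1
    rw [this]
  · rintro rfl
    exact ⟨List.isChain_singleton x, rfl, rfl⟩

lemma chainCount_self [OrderBot α] {rk : α → ℕ} (hrk : IsRankFunction rk) (x : α) :
    chainCount x x = 1 := by
  rw [chainCount, Nat.card_eq_one_iff_unique]
  constructor
  · constructor
    intro a b
    apply Subtype.ext
    rw [(isSatChain_self_iff hrk).mp a.2, (isSatChain_self_iff hrk).mp b.2]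
  · exact ⟨⟨[x], (isSatChain_self_iff hrk).mpr rfl⟩⟩

lemma isSatChain_covBy_iff [OrderBot α] {rk : α → ℕ} (hrk : IsRankFunction rk)
    {x y : α} (hxy : x ⋖ y) {l : List α} : IsSatChain x y l ↔ l = [x, y] := by
  constructor
  · intro h
    have hr := satChain_rank hrk h
    have h1 := hrk.2 x y hxy
    have hlen : l.length = 2 := by omega
    obtain ⟨a, b, rfl⟩ := List.length_eq_two.mp hlen
    have ha : a = x := by simpa using h.2.1
    have hb : b = y := by simpa using h.2.2
    rw [ha, hb]
  · rintro rfl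
    exact ⟨List.isChain_pair.mpr hxy, rfl, rfl⟩

lemma chainCount_covBy [OrderBot α] {rk : α → ℕ} (hrk : IsRankFunction rk)
    {x y : α} (hxy : x ⋖ y) : chainCount x y = 1 := by
  rw [chainCount, Nat.card_eq_one_iff_unique]
  constructor
  · constructor
    intro a b
    apply Subtype.ext
    rw [(isSatChain_covBy_iff hrk hxy).mp a.2, (isSatChain_covBy_iff hrk hxy).mp b.2]
  · exact ⟨⟨[x, y], (isSatChain_covBy_iff hrk hxy).mpr rfl⟩⟩

lemma isSatChain_two_iff [OrderBot α] {rk : α → ℕ} (hrk : IsRankFunction rk)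
    {x y : α} (h2 : rk y = rk x + 2) {l : List α} :
    IsSatChain x y l ↔ ∃ z, x ⋖ z ∧ z ⋖ y ∧ l = [x, z, y] := by
  constructor
  · intro h
    have hr := satChain_rank hrk h
    have hlen : l.length = 3 := by omega
    obtain ⟨a, b, c, rfl⟩ := List.length_eq_three.mp hlen
    have ha : a = x := by simpa using h.2.1
    have hc : c = y := by simpa using h.2.2
    subst ha; subst hc
    have hch := h.1
    unfold List.Chain' at hch; rw [List.isChain_cons_cons, List.isChain_pair] at hch
    exact ⟨b, hch.1, hch.2, rfl⟩
  · rintro ⟨z, h1, h2', rfl⟩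
    refine ⟨?_, rfl, rfl⟩
    unfold List.Chain'; rw [List.isChain_cons_cons, List.isChain_pair]
    exact ⟨h1, h2'⟩

lemma chainCount_two [OrderBot α] {rk : α → ℕ} (hrk : IsRankFunction rk)
    {x y : α} (h2 : rk y = rk x + 2) :
    chainCount x y = Nat.card {z : α // x ⋖ z ∧ z ⋖ y} := by
  rw [chainCount]
  symm
  apply Nat.card_eq_of_bijective
    (f := fun z => ⟨[x, z.1, y], (isSatChain_two_iff hrk h2).mpr ⟨z.1, z.2.1, z.2.2, rfl⟩⟩)
  constructor
  · intro a b hab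
    apply Subtype.ext
    have := congrArg Subtype.val hab
    simpa using this
  · rintro ⟨l, hl⟩
    obtain ⟨z, hz1, hz2, rfl⟩ := (isSatChain_two_iff hrk h2).mp hl
    exact ⟨⟨z, hz1, hz2⟩, rfl⟩

lemma length_eq_four {β : Type*} {l : List β} (h : l.length = 4) :
    ∃ a b c d, l = [a, b, c, d] := by
  rcases l with _ | ⟨a, _ | ⟨b, _ | ⟨c, _ | ⟨d, _ | ⟨e, t⟩⟩⟩⟩⟩ <;>
      simp only [List.length_cons, List.length_nil] at h <;> try omega
  exact ⟨a, b, c, d, rfl⟩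

lemma isSatChain_three_iff [OrderBot α] {rk : α → ℕ} (hrk : IsRankFunction rk)
    {x y : α} (h3 : rk y = rk x + 3) {l : List α} :
    IsSatChain x y l ↔ ∃ z w, x ⋖ z ∧ z ⋖ w ∧ w ⋖ y ∧ l = [x, z, w, y] := by
  constructor
  · intro h
    have hr := satChain_rank hrk h
    have hlen : l.length = 4 := by omega
    obtain ⟨a, b, c, d, rfl⟩ := length_eq_four hlen
    have ha : a = x := by simpa using h.2.1
    have hd : d = y := by simpa using h.2.2
    subst ha; subst hd
    have hch := h.1
    unfold List.Chain' at hch; rw [List.isChain_cons_cons, List.isChain_cons_cons, List.isChain_pair] at hch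
    exact ⟨b, c, hch.1, hch.2.1, hch.2.2, rfl⟩
  · rintro ⟨z, w, h1, h2', h3', rfl⟩
    refine ⟨?_, rfl, rfl⟩
    unfold List.Chain'; rw [List.isChain_cons_cons, List.isChain_cons_cons, List.isChain_pair]
    exact ⟨h1, h2', h3'⟩

lemma chainCount_three [OrderBot α] {rk : α → ℕ} (hrk : IsRankFunction rk)
    {x y : α} (h3 : rk y = rk x + 3) :
    chainCount x y = Nat.card {p : α × α // x ⋖ p.1 ∧ p.1 ⋖ p.2 ∧ p.2 ⋖ y} := by
  rw [chainCount]
  symm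
  apply Nat.card_eq_of_bijective
    (f := fun p => ⟨[x, p.1.1, p.1.2, y],
      (isSatChain_three_iff hrk h3).mpr ⟨p.1.1, p.1.2, p.2.1, p.2.2.1, p.2.2.2, rfl⟩⟩)
  constructor
  · intro a b hab
    apply Subtype.ext
    have := congrArg Subtype.val hab
    simp at this
    exact Prod.ext this.1 this.2
  · rintro ⟨l, hl⟩
    obtain ⟨z, w, h1, h2', h3', rfl⟩ := (isSatChain_three_iff hrk h3).mp hl
    exact ⟨⟨(z, w), h1, h2', h3'⟩, rfl⟩

lemma exists_satChain [Fintype α] : ∀ x y : α, x ≤ y → ∃ l, IsSatChain x y l := by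
  letI := Fintype.toLocallyFiniteOrder (α := α)
  suffices key : ∀ n : ℕ, ∀ x y : α, (Finset.Ioc x y).card ≤ n → x ≤ y → ∃ l, IsSatChain x y l by
    intro x y h; exact key _ x y le_rfl h
  intro n
  induction n with
  | zero =>
    intro x y hc hxy
    have hxy' : x = y := by
      by_contra h
      have hm : y ∈ Finset.Ioc x y := Finset.mem_Ioc.2 ⟨lt_of_le_of_ne hxy h, le_rfl⟩
      have := Finset.card_pos.2 ⟨y, hm⟩
      omega
    exact ⟨[x], by subst hxy'; exact ⟨List.isChain_singleton x, rfl, rfl⟩⟩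
  | succ n ih =>
    intro x y hc hxy
    rcases eq_or_lt_of_le hxy with rfl | hlt
    · exact ⟨[x], ⟨List.isChain_singleton x, rfl, rfl⟩⟩
    · obtain ⟨z, hxz, hzy⟩ := hlt.exists_covby_le
      have hsub : Finset.Ioc z y ⊆ Finset.Ioc x y := by
        intro w hw
        rw [Finset.mem_Ioc] at *
        exact ⟨hxz.lt.trans hw.1, hw.2⟩
      have hzmem : z ∈ Finset.Ioc x y := Finset.mem_Ioc.2 ⟨hxz.lt, hzy⟩
      have hznot : z ∉ Finset.Ioc z y := by simp
      have hcard : (Finset.Ioc z y).card < (Finset.Ioc x y).card :=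
        Finset.card_lt_card ((Finset.ssubset_iff_of_subset hsub).2 ⟨z, hzmem, hznot⟩)
      obtain ⟨l, hl⟩ := ih z y (by omega) hzy
      rcases l with _ | ⟨b, t⟩
      · simp [IsSatChain] at hl
      · have hb : b = z := by simpa using hl.2.1
        refine ⟨x :: b :: t, ?_, rfl, ?_⟩
        · unfold List.Chain'; rw [List.isChain_cons_cons]
          exact ⟨hb ▸ hxz, hl.1⟩
        · rw [List.getLast?_cons_cons]
          exact hl.2.2

lemma rk_lt_of_lt [Fintype α] [OrderBot α] {rk : α → ℕ} (hrk : IsRankFunction rk)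
    {x y : α} (h : x < y) : rk x < rk y := by
  obtain ⟨l, hl⟩ := exists_satChain x y h.le
  have hr := satChain_rank hrk hl
  rcases l with _ | ⟨a, t⟩
  · simp [IsSatChain] at hl
  rcases t with _ | ⟨b, t'⟩
  · have hx : a = x := by simpa using hl.2.1
    have hy : a = y := by simpa using hl.2.2
    exact absurd (hx ▸ hy) h.ne
  · simp only [List.length_cons] at hr
    omega

lemma rk_le_of_le [Fintype α] [OrderBot α] {rk : α → ℕ} (hrk : IsRankFunction rk)
    {x y : α} (h : x ≤ y) : rk x ≤ rk y := by
  rcases eq_or_lt_of_le h with rfl | h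
  · exact le_refl _
  · exact (rk_lt_of_lt hrk h).le

lemma covBy_iff_rk [Fintype α] [OrderBot α] {rk : α → ℕ} (hrk : IsRankFunction rk)
    {x y : α} (h : x < y) : x ⋖ y ↔ rk y = rk x + 1 := by
  refine ⟨fun hc => hrk.2 x y hc, fun hr => ⟨h, fun z hz hzy => ?_⟩⟩
  have h1 := rk_lt_of_lt hrk hz
  have h2 := rk_lt_of_lt hrk hzy
  omega

lemma eq_of_le_of_rk_eq [Fintype α] [OrderBot α] {rk : α → ℕ} (hrk : IsRankFunction rk)
    {x y : α} (h : x ≤ y) (hr : rk x = rk y) : x = y := by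
  rcases eq_or_lt_of_le h with rfl | h
  · rfl
  · exact absurd hr (rk_lt_of_lt hrk h).ne

end Chains

end St2Aux

namespace St2Aux

section Struct

variable {α : Type*} [Fintype α] [PartialOrder α] [BoundedOrder α] {rk : α → ℕ} {B : ℕ → ℕ}

lemma filter_card_eq_natCard {p : α → Prop} [DecidablePred p] :
    (Finset.univ.filter p).card = Nat.card {z : α // p z} := by
  rw [← Fintype.card_subtype p, Nat.card_eq_fintype_card]

lemma eq_bot_of_rk_eq_zero (hrk : IsRankFunction rk) {x : α} (h : rk x = 0) : x = ⊥ := by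
  by_contra hne
  have : ⊥ < x := bot_le.lt_of_ne (Ne.symm hne)
  have := rk_lt_of_lt hrk this
  rw [hrk.1] at this
  omega

lemma rk_le_three (hrk : IsRankFunction rk) (hrank : rk ⊤ = 3) (x : α) : rk x ≤ 3 := by
  rcases eq_or_lt_of_le (le_top (a := x)) with rfl | h
  · omega
  · have := rk_lt_of_lt hrk h; omega

lemma eq_top_of_rk_eq_three (hrk : IsRankFunction rk) (hrank : rk ⊤ = 3) {x : α}
    (h : rk x = 3) : x = ⊤ := by
  rcases eq_or_lt_of_le (le_top (a := x)) with rfl | hlt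
  · rfl
  · have := rk_lt_of_lt hrk hlt; omega

lemma bot_covBy_iff (hrk : IsRankFunction rk) {a : α} : ⊥ ⋖ a ↔ rk a = 1 := by
  constructor
  · intro h
    have := hrk.2 ⊥ a h
    rw [hrk.1] at this
    omega
  · intro h
    have hne : a ≠ ⊥ := fun he => by rw [he, hrk.1] at h; omega
    have hlt : ⊥ < a := bot_le.lt_of_ne (Ne.symm hne)
    rw [covBy_iff_rk hrk hlt, hrk.1, h]

lemma covBy_top_iff (hrk : IsRankFunction rk) (hrank : rk ⊤ = 3) {c : α} :
    c ⋖ ⊤ ↔ rk c = 2 := by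
  constructor
  · intro h
    have := hrk.2 c ⊤ h
    omega
  · intro h
    have hne : c ≠ ⊤ := fun he => by rw [he, hrank] at h; omega
    have hlt : c < ⊤ := le_top.lt_of_ne hne
    rw [covBy_iff_rk hrk hlt, hrank, h]

lemma covBy_mid (hrk : IsRankFunction rk) {a c : α} (ha : rk a = 1) (hc : rk c = 2) :
    a ⋖ c ↔ a < c := by
  constructor
  · exact fun h => h.lt
  · intro h
    rw [covBy_iff_rk hrk h, ha, hc]

lemma exists_flag0 (hrk : IsRankFunction rk) (hrank : rk ⊤ = 3) :
    ∃ a c : α, ⊥ ⋖ a ∧ a ⋖ c ∧ c ⋖ ⊤ := by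
  obtain ⟨l, hl⟩ := exists_satChain (⊥ : α) ⊤ bot_le
  have h3 : rk (⊤ : α) = rk (⊥ : α) + 3 := by rw [hrk.1, hrank]
  obtain ⟨z, w, h1, h2, h3', -⟩ := (isSatChain_three_iff hrk h3).mp hl
  exact ⟨z, w, h1, h2, h3'⟩

lemma B_two (hrk : IsRankFunction rk) (hB : IsBinomial rk B) (hE : IsEulerian rk)
    (hrank : rk ⊤ = 3) : B 2 = 2 := by
  obtain ⟨a, c, ha, hac, hc⟩ := exists_flag0 hrk hrank
  have hrc : rk c = 2 := (covBy_top_iff hrk hrank).mp hc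
  have hcb : (⊥ : α) < c := by
    have : rk a = 1 := (bot_covBy_iff hrk).mp ha
    exact ha.lt.trans hac.lt
  have h1 : chainCount ⊥ c = B 2 := by
    have := hB ⊥ c hcb.le
    rw [hrk.1, hrc] at this
    simpa using this
  have h2 : chainCount ⊥ c = Nat.card {z : α // ⊥ ⋖ z ∧ z ⋖ c} :=
    chainCount_two hrk (by rw [hrk.1, hrc])
  have hEP := hE ⊥ c hcb
  rw [EulerPoincare] at hEP
  have heven : (Finset.univ.filter fun z => ⊥ ≤ z ∧ z ≤ c ∧ Even (rk z)) = {⊥, c} := by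
    ext z
    simp only [Finset.mem_filter, Finset.mem_univ, true_and, Finset.mem_insert,
      Finset.mem_singleton]
    constructor
    · rintro ⟨-, hzc, hev⟩
      have hle : rk z ≤ 2 := by
        have := rk_le_of_le hrk hzc; omega
      rcases hev with ⟨k, hk⟩
      have : rk z = 0 ∨ rk z = 2 := by omega
      rcases this with h0 | h2'
      · exact Or.inl (eq_bot_of_rk_eq_zero hrk h0)
      · exact Or.inr (eq_of_le_of_rk_eq hrk hzc (by omega))
    · rintro (rfl | rfl)
      · exact ⟨le_rfl, bot_le, by rw [hrk.1]; exact Even.zero⟩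
      · exact ⟨bot_le, le_rfl, by rw [hrc]; exact even_two⟩
  have hodd : (Finset.univ.filter fun z => ⊥ ≤ z ∧ z ≤ c ∧ ¬ Even (rk z)) =
      (Finset.univ.filter fun z => ⊥ ⋖ z ∧ z ⋖ c) := by
    ext z
    simp only [Finset.mem_filter, Finset.mem_univ, true_and]
    constructor
    · rintro ⟨-, hzc, hodd⟩
      have hle : rk z ≤ 2 := by have := rk_le_of_le hrk hzc; omega
      have h1' : rk z = 1 := by
        rcases Nat.even_or_odd (rk z) with he | ho
        · exact absurd he hodd
        · rcases ho with ⟨k, hk⟩; omega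
      refine ⟨(bot_covBy_iff hrk).mpr h1', ?_⟩
      have hlt : z < c := lt_of_le_of_ne hzc (fun he => by rw [he] at h1'; omega)
      exact (covBy_mid hrk h1' hrc).mpr hlt
    · rintro ⟨h1', h2'⟩
      have hz1 : rk z = 1 := (bot_covBy_iff hrk).mp h1'
      exact ⟨bot_le, h2'.le, by rw [hz1]; simp⟩
  rw [heven, hodd] at hEP
  have hbc : (⊥ : α) ≠ c := hcb.ne
  have hcard2 : ({⊥, c} : Finset α).card = 2 := by
    rw [Finset.card_insert_of_notMem (by simpa using hbc), Finset.card_singleton]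
  rw [hcard2] at hEP
  simp only [filter_card_eq_natCard] at hEP
  rw [h1] at h2
  omega

/-- Atoms below a coatom. -/
noncomputable def AtUnder (rk : α → ℕ) (c : α) : Finset α := Finset.univ.filter fun a => rk a = 1 ∧ a < c

/-- Coatoms above an atom. -/
noncomputable def CoOver (rk : α → ℕ) (a : α) : Finset α := Finset.univ.filter fun c => rk c = 2 ∧ a < c

lemma card_atUnder (hrk : IsRankFunction rk) (hB : IsBinomial rk B) (hE : IsEulerian rk)
    (hrank : rk ⊤ = 3) {c : α} (hc : rk c = 2) : (AtUnder rk c).card = 2 := by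
  have hset : (AtUnder rk c) = Finset.univ.filter fun z => ⊥ ⋖ z ∧ z ⋖ c := by
    ext z
    simp only [AtUnder, Finset.mem_filter, Finset.mem_univ, true_and]
    constructor
    · rintro ⟨h1, h2⟩
      exact ⟨(bot_covBy_iff hrk).mpr h1, (covBy_mid hrk h1 hc).mpr h2⟩
    · rintro ⟨h1, h2⟩
      exact ⟨(bot_covBy_iff hrk).mp h1, h2.lt⟩
  have hcb : (⊥ : α) < c := by
    have : c ≠ ⊥ := fun he => by rw [he, hrk.1] at hc; omega
    exact bot_le.lt_of_ne (Ne.symm this)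
  have h1 : chainCount ⊥ c = B 2 := by
    have := hB ⊥ c hcb.le
    rw [hrk.1, hc] at this
    simpa using this
  have h2 : chainCount ⊥ c = Nat.card {z : α // ⊥ ⋖ z ∧ z ⋖ c} :=
    chainCount_two hrk (by rw [hrk.1, hc])
  rw [hset]
  simp only [filter_card_eq_natCard]
  rw [← h2, h1, B_two hrk hB hE hrank]

lemma card_coOver (hrk : IsRankFunction rk) (hB : IsBinomial rk B) (hE : IsEulerian rk)
    (hrank : rk ⊤ = 3) {a : α} (ha : rk a = 1) : (CoOver rk a).card = 2 := by
  have hset : (CoOver rk a) = Finset.univ.filter fun z => a ⋖ z ∧ z ⋖ ⊤ := by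
    ext z
    simp only [CoOver, Finset.mem_filter, Finset.mem_univ, true_and]
    constructor
    · rintro ⟨h1, h2⟩
      exact ⟨(covBy_mid hrk ha h1).mpr h2, (covBy_top_iff hrk hrank).mpr h1⟩
    · rintro ⟨h1, h2⟩
      exact ⟨(covBy_top_iff hrk hrank).mp h2, h1.lt⟩
  have hat : a < ⊤ := by
    have : a ≠ ⊤ := fun he => by rw [he, hrank] at ha; omega
    exact le_top.lt_of_ne this
  have h1 : chainCount a ⊤ = B 2 := by
    have := hB a ⊤ hat.le
    rw [hrank, ha] at this
    simpa using this
  have h2 : chainCount a ⊤ = Nat.card {z : α // a ⋖ z ∧ z ⋖ ⊤} :=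
    chainCount_two hrk (by rw [hrank, ha])
  rw [hset]
  simp only [filter_card_eq_natCard]
  rw [← h2, h1, B_two hrk hB hE hrank]

end Struct

section Other2

variable {α : Type*}

/-- The other element of a two-element finset. -/
noncomputable def other2 (s : Finset α) (x : α) : α :=
  if h : (s.erase x).Nonempty then h.choose else x

lemma other2_spec {s : Finset α} (h2 : s.card = 2) {x : α} (hx : x ∈ s) :
    s.erase x = {other2 s x} := by
  have hcard : (s.erase x).card = 1 := by rw [Finset.card_erase_of_mem hx, h2]
  obtain ⟨a, ha⟩ := Finset.card_eq_one.mp hcard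
  have hne : (s.erase x).Nonempty := by rw [ha]; exact ⟨a, Finset.mem_singleton_self a⟩
  rw [other2, dif_pos hne]
  have hsub : s.erase x ⊆ {a} := by rw [ha]
  have hc : hne.choose = a := Finset.mem_singleton.mp (hsub hne.choose_spec)
  rw [hc]
  exact ha

lemma other2_mem {s : Finset α} (h2 : s.card = 2) {x : α} (hx : x ∈ s) : other2 s x ∈ s := by
  have := other2_spec h2 hx
  have hm : other2 s x ∈ s.erase x := by rw [this]; exact Finset.mem_singleton_self _
  exact Finset.mem_of_mem_erase hm

lemma other2_ne {s : Finset α} (h2 : s.card = 2) {x : α} (hx : x ∈ s) : other2 s x ≠ x := by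
  have := other2_spec h2 hx
  have hm : other2 s x ∈ s.erase x := by rw [this]; exact Finset.mem_singleton_self _
  exact (Finset.mem_erase.mp hm).1

lemma mem_iff_other2 {s : Finset α} (h2 : s.card = 2) {x : α} (hx : x ∈ s) {y : α} :
    y ∈ s ↔ y = x ∨ y = other2 s x := by
  constructor
  · intro hy
    rcases eq_or_ne y x with rfl | hne
    · exact Or.inl rfl
    · right
      have : y ∈ s.erase x := Finset.mem_erase.mpr ⟨hne, hy⟩
      rw [other2_spec h2 hx] at this
      exact Finset.mem_singleton.mp this
  · rintro (rfl | rfl)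
    · exact hx
    · exact other2_mem h2 hx

lemma other2_other2 {s : Finset α} (h2 : s.card = 2) {x : α} (hx : x ∈ s) :
    other2 s (other2 s x) = x := by
  have hm := other2_mem h2 hx
  have hne := other2_ne h2 hx
  have hs := other2_spec h2 hm
  have hxm : x ∈ s.erase (other2 s x) := Finset.mem_erase.mpr ⟨Ne.symm hne, hx⟩
  rw [hs] at hxm
  exact (Finset.mem_singleton.mp hxm).symm

end Other2

section PermAlg

variable {G : Type*} [Group G]

lemma alg1 {s t : G} (hs : s * s = 1) : ∀ n : ℕ, s * (t * s) ^ n = (s * t) ^ n * s := by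
  intro n
  induction n with
  | zero => simp
  | succ n ih =>
    rw [pow_succ, ← mul_assoc, ih, pow_succ]
    simp [mul_assoc]

variable {F : Type*}

/-- Fixed-point-free. -/
def FPF (g : Equiv.Perm F) : Prop := ∀ f, g f ≠ f

lemma fpf_conj {g h : Equiv.Perm F} (hg : FPF g) : FPF (h * g * h⁻¹) := by
  intro f he
  apply hg (h⁻¹ f)
  have := congrArg (⇑h⁻¹) he
  simpa using this

lemma inv_eq_self {s : Equiv.Perm F} (hs : s * s = 1) : s⁻¹ = s :=
  inv_eq_of_mul_eq_one_right hs

lemma fpf_words {s t : Equiv.Perm F} (hs : s * s = 1) (ht : t * t = 1)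
    (hfs : FPF s) (hft : FPF t) : ∀ n : ℕ, FPF ((s * t) ^ n * s) ∧ FPF ((t * s) ^ n * t) := by
  intro n
  induction n with
  | zero => simpa using ⟨hfs, hft⟩
  | succ n ih =>
    constructor
    · have key : (s * t) ^ (n + 1) * s = s * ((t * s) ^ n * t) * s⁻¹ := by
        rw [inv_eq_self hs, ← mul_assoc, alg1 hs, pow_succ]
        simp [mul_assoc]
      rw [key]
      exact fpf_conj ih.2
    · have key : (t * s) ^ (n + 1) * t = t * ((s * t) ^ n * s) * t⁻¹ := by
        rw [inv_eq_self ht, ← mul_assoc, alg1 ht, pow_succ]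
        simp [mul_assoc]
      rw [key]
      exact fpf_conj ih.1

lemma s_not_in_orbit {s t : Equiv.Perm F} (hs : s * s = 1) (ht : t * t = 1)
    (hfs : FPF s) (hft : FPF t) (n : ℕ) (f : F) : ((s * t) ^ n) f ≠ s f := by
  intro h
  rcases n with _ | m
  · simp at h
    exact hfs f h.symm
  · have h2 : (s * ((s * t) ^ (m + 1))) f = (s * s) f := by
      rw [Equiv.Perm.mul_apply, Equiv.Perm.mul_apply, h]
    have h3 : s * (s * t) ^ (m + 1) = (t * s) ^ m * t := by
      rw [pow_succ', ← mul_assoc, ← mul_assoc, hs, one_mul, alg1 ht]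
    rw [h3, hs] at h2
    simp at h2
    exact (fpf_words hs ht hfs hft m).2 f h2

lemma t_not_in_orbit {s t : Equiv.Perm F} (hs : s * s = 1) (ht : t * t = 1)
    (hfs : FPF s) (hft : FPF t) (n : ℕ) (f : F) : ((s * t) ^ n) f ≠ t f := by
  intro h
  have h2 : (t * ((s * t) ^ n)) f = (t * t) f := by
    rw [Equiv.Perm.mul_apply, Equiv.Perm.mul_apply, h]
  have h3 : t * (s * t) ^ n = (t * s) ^ n * t := alg1 ht n
  rw [h3, ht] at h2
  simp at h2
  exact (fpf_words hs ht hfs hft n).2 f h2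

lemma conj_pi_s {s t : Equiv.Perm F} (hs : s * s = 1) (ht : t * t = 1) (z : ℤ) :
    s * (s * t) ^ z * s = ((s * t) ^ (-z) : Equiv.Perm F) := by
  have base : s * (s * t) * s⁻¹ = ((s * t)⁻¹ : Equiv.Perm F) := by
    rw [mul_inv_rev, inv_eq_self hs, inv_eq_self ht, ← mul_assoc, hs, one_mul]
  calc s * (s * t) ^ z * s = s * (s * t) ^ z * s⁻¹ := by rw [inv_eq_self hs]
    _ = (s * (s * t) * s⁻¹) ^ z := conj_zpow.symm
    _ = ((s * t)⁻¹) ^ z := by rw [base]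
    _ = (s * t) ^ (-z) := by rw [inv_zpow, zpow_neg]

lemma conj_pi_t {s t : Equiv.Perm F} (hs : s * s = 1) (ht : t * t = 1) (z : ℤ) :
    t * (s * t) ^ z * t = ((s * t) ^ (-z) : Equiv.Perm F) := by
  have base : t * (s * t) * t⁻¹ = ((s * t)⁻¹ : Equiv.Perm F) := by
    rw [mul_inv_rev, inv_eq_self hs, inv_eq_self ht, mul_assoc, mul_assoc, ht]
    simp
  calc t * (s * t) ^ z * t = t * (s * t) ^ z * t⁻¹ := by rw [inv_eq_self ht]
    _ = (t * (s * t) * t⁻¹) ^ z := conj_zpow.symm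
    _ = ((s * t)⁻¹) ^ z := by rw [base]
    _ = (s * t) ^ (-z) := by rw [inv_zpow, zpow_neg]

lemma zpow_reduce [Finite F] (g : Equiv.Perm F) (z : ℤ) : ∃ n : ℕ, g ^ z = g ^ n := by
  refine ⟨(z % (orderOf g : ℤ)).toNat, ?_⟩
  have h0 : 0 < orderOf g := orderOf_pos g
  have hmod := zpow_mod_orderOf g z
  rw [← hmod, ← zpow_natCast]
  congr 1
  rw [Int.toNat_of_nonneg (Int.emod_nonneg z (by exact_mod_cast h0.ne'))]

lemma s_not_in_zorbit [Finite F] {s t : Equiv.Perm F} (hs : s * s = 1) (ht : t * t = 1)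
    (hfs : FPF s) (hft : FPF t) (z : ℤ) (f : F) : ((s * t) ^ z) f ≠ s f := by
  obtain ⟨n, hn⟩ := zpow_reduce (s * t) z
  rw [hn]
  exact s_not_in_orbit hs ht hfs hft n f

lemma t_not_in_zorbit [Finite F] {s t : Equiv.Perm F} (hs : s * s = 1) (ht : t * t = 1)
    (hfs : FPF s) (hft : FPF t) (z : ℤ) (f : F) : ((s * t) ^ z) f ≠ t f := by
  obtain ⟨n, hn⟩ := zpow_reduce (s * t) z
  rw [hn]
  exact t_not_in_orbit hs ht hfs hft n f

lemma s_mul_pow {s t : Equiv.Perm F} (hs : s * s = 1) (ht : t * t = 1) (z : ℤ) :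
    s * (s * t) ^ z = (s * t) ^ (-z) * s := by
  have h2 : s * (s * t) ^ z * s * s = s * (s * t) ^ z := by
    rw [mul_assoc (s * (s * t) ^ z) s s, hs, mul_one]
  rw [conj_pi_s hs ht] at h2
  exact h2.symm

lemma t_mul_pow {s t : Equiv.Perm F} (hs : s * s = 1) (ht : t * t = 1) (z : ℤ) :
    t * (s * t) ^ z = (s * t) ^ (-z) * t := by
  have h2 : t * (s * t) ^ z * t * t = t * (s * t) ^ z := by
    rw [mul_assoc (t * (s * t) ^ z) t t, ht, mul_one]
  rw [conj_pi_t hs ht] at h2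
  exact h2.symm

lemma perm_zpow_cancel (g : Equiv.Perm F) (z : ℤ) (f : F) : (g ^ (-z)) ((g ^ z) f) = f := by
  rw [← Equiv.Perm.mul_apply, ← zpow_add, neg_add_cancel, zpow_zero, Equiv.Perm.one_apply]

lemma zpow_add_apply (g : Equiv.Perm F) (a b : ℤ) (f : F) :
    (g ^ a) ((g ^ b) f) = (g ^ (a + b)) f := by
  rw [← Equiv.Perm.mul_apply, ← zpow_add]

lemma pow_apply_eq_iterate (g : Equiv.Perm F) (n : ℕ) (f : F) : (g ^ n) f = (⇑g)^[n] f :=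
  congrFun (Equiv.Perm.coe_pow g n) f

end PermAlg

end St2Aux

namespace St2Aux

section Flags

variable {α : Type*} [Fintype α] [PartialOrder α] [BoundedOrder α] {rk : α → ℕ}

/-- Flags: incident atom–coatom pairs. -/
abbrev Flags (rk : α → ℕ) : Type _ := {p : α × α // rk p.1 = 1 ∧ rk p.2 = 2 ∧ p.1 < p.2}

/-- The 2-regularity setup. -/
structure Setup (rk : α → ℕ) : Prop where
  at2 : ∀ c : α, rk c = 2 → (AtUnder rk c).card = 2
  co2 : ∀ a : α, rk a = 1 → (CoOver rk a).card = 2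

lemma mem_atUnder {c a : α} : a ∈ AtUnder rk c ↔ rk a = 1 ∧ a < c := by
  simp [AtUnder]

lemma mem_coOver {a c : α} : c ∈ CoOver rk a ↔ rk c = 2 ∧ a < c := by
  simp [CoOver]

lemma flag_fst_mem (f : Flags rk) : f.1.1 ∈ AtUnder rk f.1.2 :=
  mem_atUnder.mpr ⟨f.2.1, f.2.2.2⟩

lemma flag_snd_mem (f : Flags rk) : f.1.2 ∈ CoOver rk f.1.1 :=
  mem_coOver.mpr ⟨f.2.2.1, f.2.2.2⟩

variable (S : Setup rk)

/-- `sigmaF` fixes the atom, changes the coatom. -/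
noncomputable def sigmaF (f : Flags rk) : Flags rk :=
  ⟨(f.1.1, other2 (CoOver rk f.1.1) f.1.2), f.2.1,
    (mem_coOver.mp (other2_mem (S.co2 _ f.2.1) (flag_snd_mem f))).1,
    (mem_coOver.mp (other2_mem (S.co2 _ f.2.1) (flag_snd_mem f))).2⟩

/-- `tauF` fixes the coatom, changes the atom. -/
noncomputable def tauF (f : Flags rk) : Flags rk :=
  ⟨(other2 (AtUnder rk f.1.2) f.1.1, f.1.2),
    (mem_atUnder.mp (other2_mem (S.at2 _ f.2.2.1) (flag_fst_mem f))).1, f.2.2.1,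
    (mem_atUnder.mp (other2_mem (S.at2 _ f.2.2.1) (flag_fst_mem f))).2⟩

lemma sigmaF_invol : Function.Involutive (sigmaF S) := by
  intro f
  apply Subtype.ext
  apply Prod.ext
  · rfl
  · show other2 (CoOver rk f.1.1) (other2 (CoOver rk f.1.1) f.1.2) = f.1.2
    exact other2_other2 (S.co2 _ f.2.1) (flag_snd_mem f)

lemma tauF_invol : Function.Involutive (tauF S) := by
  intro f
  apply Subtype.ext
  apply Prod.ext
  · show other2 (AtUnder rk f.1.2) (other2 (AtUnder rk f.1.2) f.1.1) = f.1.1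
    exact other2_other2 (S.at2 _ f.2.2.1) (flag_fst_mem f)
  · rfl

/-- The involution fixing atoms. -/
noncomputable def sg : Equiv.Perm (Flags rk) :=
  Function.Involutive.toPerm _ (sigmaF_invol S)

/-- The involution fixing coatoms. -/
noncomputable def tu : Equiv.Perm (Flags rk) :=
  Function.Involutive.toPerm _ (tauF_invol S)

lemma sg_fst (f : Flags rk) : ((sg S) f).1.1 = f.1.1 := rfl

lemma sg_snd (f : Flags rk) : ((sg S) f).1.2 = other2 (CoOver rk f.1.1) f.1.2 := rfl

lemma tu_fst (f : Flags rk) : ((tu S) f).1.1 = other2 (AtUnder rk f.1.2) f.1.1 := rfl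

lemma tu_snd (f : Flags rk) : ((tu S) f).1.2 = f.1.2 := rfl

lemma sg_sg (f : Flags rk) : (sg S) ((sg S) f) = f := sigmaF_invol S f

lemma tu_tu (f : Flags rk) : (tu S) ((tu S) f) = f := tauF_invol S f

lemma sg_sq : sg S * sg S = 1 := by
  apply Equiv.ext
  intro f
  rw [Equiv.Perm.mul_apply]
  exact (sg_sg S f).trans (Equiv.Perm.one_apply f).symm

lemma tu_sq : tu S * tu S = 1 := by
  apply Equiv.ext
  intro f
  rw [Equiv.Perm.mul_apply]
  exact (tu_tu S f).trans (Equiv.Perm.one_apply f).symm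

lemma sg_fpf : FPF (sg S) := by
  intro f he
  exact other2_ne (S.co2 _ f.2.1) (flag_snd_mem f) (congrArg (fun g : Flags rk => g.1.2) he)

lemma tu_fpf : FPF (tu S) := by
  intro f he
  exact other2_ne (S.at2 _ f.2.2.1) (flag_fst_mem f) (congrArg (fun g : Flags rk => g.1.1) he)

lemma eq_or_sg {f g : Flags rk} (h : f.1.1 = g.1.1) : g = f ∨ g = (sg S) f := by
  have hmemg : g.1.2 ∈ CoOver rk f.1.1 := mem_coOver.mpr ⟨g.2.2.1, h ▸ g.2.2.2⟩
  rcases (mem_iff_other2 (S.co2 _ f.2.1) (flag_snd_mem f)).mp hmemg with h2 | h2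
  · exact Or.inl (Subtype.ext (Prod.ext h.symm h2))
  · exact Or.inr (Subtype.ext (Prod.ext h.symm h2))

lemma eq_or_tu {f g : Flags rk} (h : f.1.2 = g.1.2) : g = f ∨ g = (tu S) f := by
  have hmemg : g.1.1 ∈ AtUnder rk f.1.2 := mem_atUnder.mpr ⟨g.2.1, h ▸ g.2.2.2⟩
  rcases (mem_iff_other2 (S.at2 _ f.2.2.1) (flag_fst_mem f)).mp hmemg with h2 | h2
  · exact Or.inl (Subtype.ext (Prod.ext h2 h.symm))
  · exact Or.inr (Subtype.ext (Prod.ext h2 h.symm))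

/-- The rotation. -/
noncomputable def pp : Equiv.Perm (Flags rk) := sg S * tu S

lemma pp_apply (f : Flags rk) : (pp S) f = (sg S) ((tu S) f) := rfl

lemma pp_fpf : FPF (pp S) := by
  intro f he
  have h1 : ((pp S) f).1.1 = other2 (AtUnder rk f.1.2) f.1.1 := by
    rw [pp_apply, sg_fst, tu_fst]
  rw [he] at h1
  exact other2_ne (S.at2 _ f.2.2.1) (flag_fst_mem f) h1.symm

lemma sg_pow_apply (z : ℤ) (f : Flags rk) :
    (sg S) (((pp S) ^ z) f) = ((pp S) ^ (-z)) ((sg S) f) := by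
  have h := s_mul_pow (sg_sq S) (tu_sq S) z
  rw [← Equiv.Perm.mul_apply, pp, h, Equiv.Perm.mul_apply]

lemma tu_pow_apply (z : ℤ) (f : Flags rk) :
    (tu S) (((pp S) ^ z) f) = ((pp S) ^ (-z)) ((tu S) f) := by
  have h := t_mul_pow (sg_sq S) (tu_sq S) z
  rw [← Equiv.Perm.mul_apply, pp, h, Equiv.Perm.mul_apply]

lemma tu_sg_apply (f : Flags rk) : (tu S) ((sg S) f) = ((pp S) ^ (-1 : ℤ)) f := by
  have h : ((pp S) ^ (-1 : ℤ) : Equiv.Perm (Flags rk)) = tu S * sg S := by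
    rw [zpow_neg, zpow_one, pp, mul_inv_rev, inv_eq_self (sg_sq S), inv_eq_self (tu_sq S)]
  rw [h, Equiv.Perm.mul_apply]

lemma sg_not_orbit (z : ℤ) (f : Flags rk) : ((pp S) ^ z) f ≠ (sg S) f :=
  s_not_in_zorbit (sg_sq S) (tu_sq S) (sg_fpf S) (tu_fpf S) z f

lemma tu_not_orbit (z : ℤ) (f : Flags rk) : ((pp S) ^ z) f ≠ (tu S) f :=
  t_not_in_zorbit (sg_sq S) (tu_sq S) (sg_fpf S) (tu_fpf S) z f

/-- Connectivity relation on flags. -/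
def flagRel (f g : Flags rk) : Prop :=
  ∃ z : ℤ, ((pp S) ^ z) f = g ∨ ((pp S) ^ z) ((sg S) f) = g

lemma flagRel_refl (f : Flags rk) : flagRel S f f := ⟨0, Or.inl (by simp)⟩

lemma flagRel_symm {f g : Flags rk} (h : flagRel S f g) : flagRel S g f := by
  obtain ⟨z, hz | hz⟩ := h
  · exact ⟨-z, Or.inl (by rw [← hz, perm_zpow_cancel])⟩
  · refine ⟨z, Or.inr ?_⟩
    have h3 : ((pp S) ^ (-z)) g = (sg S) f := by rw [← hz, perm_zpow_cancel]
    have h4 : (sg S) (((pp S) ^ (-z)) g) = f := by rw [h3]; exact sg_sg S f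
    rw [sg_pow_apply, neg_neg] at h4
    exact h4

lemma flagRel_trans {f g k : Flags rk} (h1 : flagRel S f g) (h2 : flagRel S g k) :
    flagRel S f k := by
  obtain ⟨z, hz | hz⟩ := h1 <;> obtain ⟨w, hw | hw⟩ := h2
  · exact ⟨w + z, Or.inl (by rw [← zpow_add_apply, hz, hw])⟩
  · refine ⟨w + -z, Or.inr ?_⟩
    rw [← zpow_add_apply, ← sg_pow_apply, hz, hw]
  · exact ⟨w + z, Or.inr (by rw [← zpow_add_apply, hz, hw])⟩
  · refine ⟨w + -z, Or.inl ?_⟩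
    have h3 : (sg S) g = ((pp S) ^ (-z)) f := by
      rw [← hz, sg_pow_apply, sg_sg]
    rw [← hw, h3, zpow_add_apply]

/-- The component setoid. -/
noncomputable def flagSetoid : Setoid (Flags rk) :=
  ⟨flagRel S, ⟨flagRel_refl S, flagRel_symm S, flagRel_trans S⟩⟩

/-- Component index type. -/
noncomputable def Comp : Type _ := Quotient (flagSetoid S)

noncomputable instance : Fintype (Comp S) :=
  @Quotient.fintype _ _ (flagSetoid S) (fun _ _ => Classical.propDecidable _)

/-- Number of components. -/
noncomputable def nc : ℕ := Fintype.card (Comp S)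

/-- Identification of components with `Fin (nc S)`. -/
noncomputable def eC : Comp S ≃ Fin (nc S) := Fintype.equivFin (Comp S)

/-- A representative flag of each component. -/
noncomputable def rep (i : Fin (nc S)) : Flags rk := ((eC S).symm i).out

/-- The size (period) of each component. -/
noncomputable def per (i : Fin (nc S)) : ℕ := Function.minimalPeriod ⇑(pp S) (rep S i)

/-- The `j`-th atom of component `i`. -/
noncomputable def va (i : Fin (nc S)) (j : ℕ) : α := (((pp S) ^ j) (rep S i)).1.1

/-- The `j`-th coatom of component `i`. -/
noncomputable def vc (i : Fin (nc S)) (j : ℕ) : α := (((pp S) ^ j) (rep S i)).1.2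

lemma va_rk (i : Fin (nc S)) (j : ℕ) : rk (va S i j) = 1 := (((pp S) ^ j) (rep S i)).2.1

lemma vc_rk (i : Fin (nc S)) (j : ℕ) : rk (vc S i j) = 2 := (((pp S) ^ j) (rep S i)).2.2.1

lemma va_lt_vc (i : Fin (nc S)) (j : ℕ) : va S i j < vc S i j :=
  (((pp S) ^ j) (rep S i)).2.2.2

lemma mem_periodicPts (f : Flags rk) : f ∈ Function.periodicPts ⇑(pp S) := by
  refine ⟨orderOf (pp S), orderOf_pos _, ?_⟩
  show (⇑(pp S))^[orderOf (pp S)] f = f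
  rw [← Equiv.Perm.coe_pow, pow_orderOf_eq_one]
  rfl

lemma per_pos (i : Fin (nc S)) : 0 < per S i :=
  Function.minimalPeriod_pos_of_mem_periodicPts (mem_periodicPts S _)

lemma iterate_per (i : Fin (nc S)) : (⇑(pp S))^[per S i] (rep S i) = rep S i :=
  Function.iterate_minimalPeriod

lemma per_two (i : Fin (nc S)) : 2 ≤ per S i := by
  have h1 := per_pos S i
  by_contra h
  have hper : per S i = 1 := by omega
  have h2 := iterate_per S i
  rw [hper] at h2
  simp only [Function.iterate_one] at h2
  exact pp_fpf S _ h2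

lemma va_mod (i : Fin (nc S)) (j : ℕ) : va S i (j % per S i) = va S i j := by
  unfold va per
  rw [pow_apply_eq_iterate, pow_apply_eq_iterate, Function.iterate_mod_minimalPeriod_eq]

lemma vc_mod (i : Fin (nc S)) (j : ℕ) : vc S i (j % per S i) = vc S i j := by
  unfold vc per
  rw [pow_apply_eq_iterate, pow_apply_eq_iterate, Function.iterate_mod_minimalPeriod_eq]

lemma va_inj (i : Fin (nc S)) {j k : ℕ} (hj : j < per S i) (hk : k < per S i)
    (h : va S i j = va S i k) : j = k := by
  rcases eq_or_sg S (f := ((pp S) ^ j) (rep S i)) (g := ((pp S) ^ k) (rep S i)) h with hf | hf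
  · have h2 : (⇑(pp S))^[k] (rep S i) = (⇑(pp S))^[j] (rep S i) := by
      rw [← pow_apply_eq_iterate, ← pow_apply_eq_iterate, hf]
    exact (Function.iterate_injOn_Iio_minimalPeriod hk hj h2).symm
  · exfalso
    have h2 : (sg S) (((pp S) ^ (j : ℤ)) (rep S i)) = ((pp S) ^ (k : ℤ)) (rep S i) := by
      rw [zpow_natCast, zpow_natCast, ← hf]
    rw [sg_pow_apply] at h2
    have h3 := congrArg (⇑((pp S) ^ (j : ℤ))) h2
    rw [zpow_add_apply, zpow_add_apply, add_neg_cancel, zpow_zero, Equiv.Perm.one_apply] at h3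
    exact sg_not_orbit S ((j : ℤ) + k) (rep S i) h3.symm

lemma vc_inj (i : Fin (nc S)) {j k : ℕ} (hj : j < per S i) (hk : k < per S i)
    (h : vc S i j = vc S i k) : j = k := by
  rcases eq_or_tu S (f := ((pp S) ^ j) (rep S i)) (g := ((pp S) ^ k) (rep S i)) h with hf | hf
  · have h2 : (⇑(pp S))^[k] (rep S i) = (⇑(pp S))^[j] (rep S i) := by
      rw [← pow_apply_eq_iterate, ← pow_apply_eq_iterate, hf]
    exact (Function.iterate_injOn_Iio_minimalPeriod hk hj h2).symm
  · exfalso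
    have h2 : (tu S) (((pp S) ^ (j : ℤ)) (rep S i)) = ((pp S) ^ (k : ℤ)) (rep S i) := by
      rw [zpow_natCast, zpow_natCast, ← hf]
    rw [tu_pow_apply] at h2
    have h3 := congrArg (⇑((pp S) ^ (j : ℤ))) h2
    rw [zpow_add_apply, zpow_add_apply, add_neg_cancel, zpow_zero, Equiv.Perm.one_apply] at h3
    exact tu_not_orbit S ((j : ℤ) + k) (rep S i) h3.symm

lemma rel_of_atom_eq (i : Fin (nc S)) (j : ℕ) {g : Flags rk} (h : g.1.1 = va S i j) :
    flagRel S (rep S i) g := by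
  rcases eq_or_sg S (f := ((pp S) ^ j) (rep S i)) (g := g) h.symm with hg | hg
  · exact ⟨(j : ℤ), Or.inl (by rw [zpow_natCast, ← hg])⟩
  · refine ⟨-(j : ℤ), Or.inr ?_⟩
    rw [hg, ← zpow_natCast (pp S) j, sg_pow_apply]

lemma rel_of_coatom_eq (i : Fin (nc S)) (j : ℕ) {g : Flags rk} (h : g.1.2 = vc S i j) :
    flagRel S (rep S i) g := by
  rcases eq_or_tu S (f := ((pp S) ^ j) (rep S i)) (g := g) h.symm with hg | hg
  · exact ⟨(j : ℤ), Or.inl (by rw [zpow_natCast, ← hg])⟩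
  · have hτ : (tu S) (rep S i) = ((pp S) ^ (-1 : ℤ)) ((sg S) (rep S i)) := by
      conv_lhs => rw [← sg_sg S (rep S i)]
      exact tu_sg_apply S _
    refine ⟨-(j : ℤ) + -1, Or.inr ?_⟩
    rw [hg, ← zpow_natCast (pp S) j, tu_pow_apply, hτ, zpow_add_apply]

lemma comp_of_rel {i : Fin (nc S)} {g : Flags rk} (h : flagRel S (rep S i) g) :
    (eC S) (Quotient.mk (flagSetoid S) g) = i := by
  have h1 : Quotient.mk (flagSetoid S) (rep S i) = Quotient.mk (flagSetoid S) g :=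
    Quot.sound h
  have h2 : Quotient.mk (flagSetoid S) (rep S i) = (eC S).symm i := Quotient.out_eq _
  rw [← h1, h2, Equiv.apply_symm_apply]

lemma comp_eq_of_va_eq {i i' : Fin (nc S)} {j k : ℕ} (h : va S i j = va S i' k) : i = i' := by
  have r1 := rel_of_atom_eq S i j (g := ((pp S) ^ j) (rep S i)) rfl
  have r2 := rel_of_atom_eq S i' k (g := ((pp S) ^ j) (rep S i)) h
  exact (comp_of_rel S r1).symm.trans (comp_of_rel S r2)

lemma comp_eq_of_vc_eq {i i' : Fin (nc S)} {j k : ℕ} (h : vc S i j = vc S i' k) : i = i' := by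
  have r1 := rel_of_coatom_eq S i j (g := ((pp S) ^ j) (rep S i)) rfl
  have r2 := rel_of_coatom_eq S i' k (g := ((pp S) ^ j) (rep S i)) h
  exact (comp_of_rel S r1).symm.trans (comp_of_rel S r2)

lemma comp_eq_of_lt {i i' : Fin (nc S)} {j k : ℕ} (h : va S i j < vc S i' k) : i = i' := by
  have r1 := rel_of_atom_eq S i j
    (g := ⟨(va S i j, vc S i' k), va_rk S i j, vc_rk S i' k, h⟩) rfl
  have r2 := rel_of_coatom_eq S i' k
    (g := ⟨(va S i j, vc S i' k), va_rk S i j, vc_rk S i' k, h⟩) rfl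
  exact (comp_of_rel S r1).symm.trans (comp_of_rel S r2)

lemma rel_rep_self (g : Flags rk) :
    flagRel S (rep S ((eC S) (Quotient.mk (flagSetoid S) g))) g := by
  have h2 : Quotient.mk (flagSetoid S) (rep S ((eC S) (Quotient.mk (flagSetoid S) g))) =
      Quotient.mk (flagSetoid S) g := by
    have h3 : Quotient.mk (flagSetoid S) (rep S ((eC S) (Quotient.mk (flagSetoid S) g))) =
        (eC S).symm ((eC S) (Quotient.mk (flagSetoid S) g)) := Quotient.out_eq _
    rw [h3]; exact (eC S).symm_apply_apply _
  exact Quotient.exact h2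

lemma atom_surj {a : α} (ha : rk a = 1) :
    ∃ (i : Fin (nc S)) (j : ℕ), j < per S i ∧ va S i j = a := by
  have hcard := S.co2 a ha
  have hne : (CoOver rk a).Nonempty := Finset.card_pos.mp (by omega)
  obtain ⟨c, hc⟩ := hne
  obtain ⟨hc2, hac⟩ := mem_coOver.mp hc
  have hrel := rel_rep_self S (⟨(a, c), ha, hc2, hac⟩ : Flags rk)
  set i := (eC S) (Quotient.mk (flagSetoid S) (⟨(a, c), ha, hc2, hac⟩ : Flags rk)) with hidef
  obtain ⟨z, hz | hz⟩ := hrel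
  · obtain ⟨n, hn⟩ := zpow_reduce (pp S) z
    rw [hn] at hz
    refine ⟨i, n % per S i, Nat.mod_lt _ (per_pos S i), ?_⟩
    rw [va_mod]
    unfold va
    rw [hz]
  · have h4 : (sg S) (((pp S) ^ (-z)) (rep S i)) = ⟨(a, c), ha, hc2, hac⟩ := by
      rw [sg_pow_apply, neg_neg, hz]
    obtain ⟨n, hn⟩ := zpow_reduce (pp S) (-z)
    rw [hn] at h4
    refine ⟨i, n % per S i, Nat.mod_lt _ (per_pos S i), ?_⟩
    rw [va_mod]
    have h5 := congrArg (fun f : Flags rk => f.1.1) h4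
    simpa [sg_fst, va] using h5

lemma coatom_surj {c : α} (hc2 : rk c = 2) :
    ∃ (i : Fin (nc S)) (j : ℕ), j < per S i ∧ vc S i j = c := by
  have hcard := S.at2 c hc2
  have hne : (AtUnder rk c).Nonempty := Finset.card_pos.mp (by omega)
  obtain ⟨a, hamem⟩ := hne
  obtain ⟨ha, hac⟩ := mem_atUnder.mp hamem
  have hrel := rel_rep_self S (⟨(a, c), ha, hc2, hac⟩ : Flags rk)
  set i := (eC S) (Quotient.mk (flagSetoid S) (⟨(a, c), ha, hc2, hac⟩ : Flags rk)) with hidef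
  obtain ⟨z, hz | hz⟩ := hrel
  · obtain ⟨n, hn⟩ := zpow_reduce (pp S) z
    rw [hn] at hz
    refine ⟨i, n % per S i, Nat.mod_lt _ (per_pos S i), ?_⟩
    rw [vc_mod]
    unfold vc
    rw [hz]
  · have h4 : ((pp S) ^ (-z + -1)) (rep S i) = (tu S) (⟨(a, c), ha, hc2, hac⟩ : Flags rk) := by
      rw [← hz, tu_pow_apply, tu_sg_apply, zpow_add_apply]
    obtain ⟨n, hn⟩ := zpow_reduce (pp S) (-z + -1)
    rw [hn] at h4
    refine ⟨i, n % per S i, Nat.mod_lt _ (per_pos S i), ?_⟩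
    rw [vc_mod]
    have h5 := congrArg (fun f : Flags rk => f.1.2) h4
    simpa [tu_snd, vc] using h5

lemma va_succ (i : Fin (nc S)) (k : ℕ) :
    va S i (k + 1) = other2 (AtUnder rk (vc S i k)) (va S i k) := by
  show (((pp S) ^ (k + 1)) (rep S i)).1.1 = _
  rw [pow_succ', Equiv.Perm.mul_apply, pp_apply, sg_fst, tu_fst]
  rfl

lemma mem_atUnder_vc (i : Fin (nc S)) (k : ℕ) (x : α) :
    x ∈ AtUnder rk (vc S i k) ↔ x = va S i k ∨ x = va S i (k + 1) := by
  have hmem : va S i k ∈ AtUnder rk (vc S i k) :=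
    mem_atUnder.mpr ⟨va_rk S i k, va_lt_vc S i k⟩
  rw [mem_iff_other2 (S.at2 _ (vc_rk S i k)) hmem, va_succ]

lemma va_lt_vc_iff (i : Fin (nc S)) {j k : ℕ} (hj : j < per S i) (hk : k < per S i) :
    (va S i j < vc S i k ↔ j = k ∨ j = (k + 1) % per S i) := by
  constructor
  · intro h
    have hx : va S i j ∈ AtUnder rk (vc S i k) := mem_atUnder.mpr ⟨va_rk S i j, h⟩
    rw [mem_atUnder_vc] at hx
    rcases hx with hx | hx
    · exact Or.inl (va_inj S i hj hk hx)
    · right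
      have h1 : va S i (k + 1) = va S i ((k + 1) % per S i) := (va_mod S i (k + 1)).symm
      exact va_inj S i hj (Nat.mod_lt _ (per_pos S i)) (hx.trans h1)
  · rintro (rfl | rfl)
    · exact va_lt_vc S i _
    · have h1 : va S i ((k + 1) % per S i) = va S i (k + 1) := va_mod S i (k + 1)
      rw [h1, va_succ]
      exact (mem_atUnder.mp (other2_mem (S.at2 _ (vc_rk S i k))
        (mem_atUnder.mpr ⟨va_rk S i k, va_lt_vc S i k⟩))).2

lemma sum_per : ∑ i : Fin (nc S), per S i = Fintype.card {a : α // rk a = 1} := by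
  have hbij : Function.Bijective (fun p : (Σ i : Fin (nc S), Fin (per S i)) =>
      (⟨va S p.1 p.2, va_rk S p.1 p.2⟩ : {a : α // rk a = 1})) := by
    constructor
    · rintro ⟨i, j⟩ ⟨i', j'⟩ h
      have h1 : va S i j = va S i' j' := congrArg Subtype.val h
      have hi : i = i' := comp_eq_of_va_eq S h1
      subst hi
      have hjj := va_inj S i j.2 j'.2 h1
      exact Sigma.ext rfl (heq_of_eq (Fin.ext hjj))
    · rintro ⟨a, ha⟩
      obtain ⟨i, j, hj, hva⟩ := atom_surj S ha
      exact ⟨⟨i, ⟨j, hj⟩⟩, Subtype.ext hva⟩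
  have hcard := Fintype.card_of_bijective hbij
  rw [Fintype.card_sigma] at hcard
  simp only [Fintype.card_fin] at hcard
  rw [← hcard]

include S in
lemma card_flags : Fintype.card (Flags rk) = 2 * Fintype.card {a : α // rk a = 1} := by
  have e : Flags rk ≃ Σ a : {a : α // rk a = 1}, {c : α // c ∈ CoOver rk a.1} :=
    { toFun := fun f => ⟨⟨f.1.1, f.2.1⟩, ⟨f.1.2, flag_snd_mem f⟩⟩
      invFun := fun p => ⟨(p.1.1, p.2.1), p.1.2, (mem_coOver.mp p.2.2).1,
        (mem_coOver.mp p.2.2).2⟩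
      left_inv := fun f => rfl
      right_inv := fun p => rfl }
  rw [Fintype.card_congr e, Fintype.card_sigma]
  have h2 : ∀ a : {a : α // rk a = 1}, Fintype.card {c : α // c ∈ CoOver rk a.1} = 2 := by
    intro a
    have := S.co2 a.1 a.2
    simpa [Fintype.card_coe] using this
  simp only [h2]
  simp [Finset.sum_const, Finset.card_univ, mul_comm]

end Flags

section BThree

variable {α : Type*} [Fintype α] [PartialOrder α] [BoundedOrder α] {rk : α → ℕ} {B : ℕ → ℕ}

lemma mkSetup (hrk : IsRankFunction rk) (hB : IsBinomial rk B) (hE : IsEulerian rk)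
    (hrank : rk ⊤ = 3) : Setup rk :=
  ⟨fun _ hc => card_atUnder hrk hB hE hrank hc, fun _ ha => card_coOver hrk hB hE hrank ha⟩

lemma B_three (hrk : IsRankFunction rk) (hB : IsBinomial rk B) (hrank : rk ⊤ = 3) :
    B 3 = Fintype.card (Flags rk) := by
  have h1 := hB ⊥ ⊤ bot_le
  rw [hrk.1, hrank] at h1
  norm_num at h1
  have h2 := chainCount_three hrk (x := (⊥ : α)) (y := ⊤) (by rw [hrk.1, hrank])
  have e : {p : α × α // ⊥ ⋖ p.1 ∧ p.1 ⋖ p.2 ∧ p.2 ⋖ ⊤} ≃ Flags rk :=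
    Equiv.subtypeEquivRight (fun p =>
      ⟨fun h => ⟨(bot_covBy_iff hrk).mp h.1, (covBy_top_iff hrk hrank).mp h.2.2, h.2.1.lt⟩,
       fun h => ⟨(bot_covBy_iff hrk).mpr h.1, (covBy_mid hrk h.1 h.2.1).mpr h.2.2,
         (covBy_top_iff hrk hrank).mpr h.2.1⟩⟩)
  rw [← h1, h2, Nat.card_congr e, Nat.card_eq_fintype_card]

end BThree

end St2Aux

namespace St2Aux

section Poly

variable {q : ℕ}

lemma proper_cases (x : ProperPart (PolygonFL q)) :
    ∃ p : PolyMid q, x.1 = ((p : WithTop (PolyMid q)) : PolygonFL q) := by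
  obtain ⟨v, hv⟩ := x
  match v with
  | none => exact absurd rfl hv.1
  | some none => exact absurd rfl hv.2
  | some (some p) => exact ⟨p, rfl⟩

/-- Extract the middle element of a proper element of a polygon. -/
noncomputable def unProper (x : ProperPart (PolygonFL q)) : PolyMid q :=
  (proper_cases x).choose

lemma unProper_spec (x : ProperPart (PolygonFL q)) :
    x.1 = ((unProper x : WithTop (PolyMid q)) : PolygonFL q) :=
  (proper_cases x).choose_spec

/-- A middle element of a polygon as a proper element. -/
def toProper (p : PolyMid q) : ProperPart (PolygonFL q) :=
  ⟨((p : WithTop (PolyMid q)) : PolygonFL q), WithBot.coe_ne_bot,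
    fun h => WithTop.coe_ne_top (WithBot.coe_inj.mp h)⟩

lemma unProper_toProper (p : PolyMid q) : unProper (toProper p) = p := by
  have h := unProper_spec (toProper p)
  have h2 : ((p : WithTop (PolyMid q)) : PolygonFL q) =
      ((unProper (toProper p) : WithTop (PolyMid q)) : PolygonFL q) := h
  exact (WithTop.coe_inj.mp (WithBot.coe_inj.mp h2)).symm

lemma proper_ext {x y : ProperPart (PolygonFL q)} (h : unProper x = unProper y) : x = y :=
  Subtype.ext (by rw [unProper_spec x, unProper_spec y, h])

lemma proper_le_iff {x y : ProperPart (PolygonFL q)} : x ≤ y ↔ unProper x ≤ unProper y := by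
  have h1 : x ≤ y ↔ x.1 ≤ y.1 := Iff.rfl
  rw [h1, unProper_spec x, unProper_spec y, WithBot.coe_le_coe, WithTop.coe_le_coe]

lemma polyMid_le_iff {u v : PolyMid q} :
    u ≤ v ↔ (u = v ∨ (u.1 = 0 ∧ v.1 = 1 ∧ (u.2 = v.2 ∨ (u.2 : ℕ) = ((v.2 : ℕ) + 1) % q))) :=
  Iff.rfl

lemma fin2_cases (v : Fin 2) : v = 0 ∨ v = 1 := by revert v; decide

end Poly

section Iso

variable {α : Type*} [Fintype α] [PartialOrder α] [BoundedOrder α] {rk : α → ℕ}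

variable (S : Setup rk)

/-- Mapping middle elements of the polygon summation to the poset. -/
noncomputable def midMap (s : (i : Fin (nc S)) × ProperPart (PolygonFL (per S i))) : α :=
  if (unProper s.2).1 = 0 then va S s.1 ((unProper s.2).2 : ℕ) else vc S s.1 ((unProper s.2).2 : ℕ)

lemma midMap_of_zero (s : (i : Fin (nc S)) × ProperPart (PolygonFL (per S i)))
    (h : (unProper s.2).1 = 0) : midMap S s = va S s.1 ((unProper s.2).2 : ℕ) := if_pos h

lemma midMap_of_one (s : (i : Fin (nc S)) × ProperPart (PolygonFL (per S i)))
    (h : (unProper s.2).1 = 1) : midMap S s = vc S s.1 ((unProper s.2).2 : ℕ) :=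
  if_neg (by simp [h])

lemma midMap_rk (s : (i : Fin (nc S)) × ProperPart (PolygonFL (per S i))) :
    rk (midMap S s) = 1 ∨ rk (midMap S s) = 2 := by
  rcases fin2_cases (unProper s.2).1 with h | h
  · rw [midMap_of_zero S s h]; exact Or.inl (va_rk S _ _)
  · rw [midMap_of_one S s h]; exact Or.inr (vc_rk S _ _)

variable {B : ℕ → ℕ}

lemma midMap_ne_bot (hrk : IsRankFunction rk) (s) : midMap S s ≠ ⊥ := by
  intro h
  have h2 := midMap_rk S s
  rw [h, hrk.1] at h2
  omega

lemma midMap_ne_top (hrk : IsRankFunction rk) (hrank : rk ⊤ = 3) (s) : midMap S s ≠ ⊤ := by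
  intro h
  have h2 := midMap_rk S s
  rw [h, hrank] at h2
  omega

lemma alpha_bot_ne_top (hrk : IsRankFunction rk) (hrank : rk ⊤ = 3) : (⊥ : α) ≠ ⊤ := by
  intro h
  have := hrk.1
  rw [h, hrank] at this
  omega

lemma midMap_inj (hrk : IsRankFunction rk) : Function.Injective (midMap S) := by
  rintro ⟨i, x⟩ ⟨i', y⟩ h
  rcases fin2_cases (unProper x).1 with hx | hx <;> rcases fin2_cases (unProper y).1 with hy | hy
  · rw [midMap_of_zero S ⟨i, x⟩ hx, midMap_of_zero S ⟨i', y⟩ hy] at h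
    have hi := comp_eq_of_va_eq S h
    subst hi
    have hj := va_inj S i (Fin.is_lt _) (Fin.is_lt _) h
    have hxy : x = y := proper_ext (Prod.ext (hx.trans hy.symm) (Fin.ext hj))
    rw [hxy]
  · rw [midMap_of_zero S ⟨i, x⟩ hx, midMap_of_one S ⟨i', y⟩ hy] at h
    have h1 := va_rk S i ((unProper x).2 : ℕ)
    rw [h] at h1
    rw [vc_rk S i' _] at h1
    omega
  · rw [midMap_of_one S ⟨i, x⟩ hx, midMap_of_zero S ⟨i', y⟩ hy] at h
    have h1 := vc_rk S i ((unProper x).2 : ℕ)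
    rw [h] at h1
    rw [va_rk S i' _] at h1
    omega
  · rw [midMap_of_one S ⟨i, x⟩ hx, midMap_of_one S ⟨i', y⟩ hy] at h
    have hi := comp_eq_of_vc_eq S h
    subst hi
    have hj := vc_inj S i (Fin.is_lt _) (Fin.is_lt _) h
    have hxy : x = y := proper_ext (Prod.ext (hx.trans hy.symm) (Fin.ext hj))
    rw [hxy]

lemma midMap_surj_atom {x : α} (hx : rk x = 1) : ∃ s, midMap S s = x := by
  obtain ⟨i, j, hj, hva⟩ := atom_surj S hx
  refine ⟨⟨i, toProper ((0 : Fin 2), (⟨j, hj⟩ : Fin (per S i)))⟩, ?_⟩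
  have hup : unProper (toProper ((0 : Fin 2), (⟨j, hj⟩ : Fin (per S i)))) =
      ((0 : Fin 2), (⟨j, hj⟩ : Fin (per S i))) := unProper_toProper _
  rw [midMap_of_zero S _ (by rw [hup]), hup]
  exact hva

lemma midMap_surj_coatom {x : α} (hx : rk x = 2) : ∃ s, midMap S s = x := by
  obtain ⟨i, j, hj, hvc⟩ := coatom_surj S hx
  refine ⟨⟨i, toProper ((1 : Fin 2), (⟨j, hj⟩ : Fin (per S i)))⟩, ?_⟩
  have hup : unProper (toProper ((1 : Fin 2), (⟨j, hj⟩ : Fin (per S i)))) =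
      ((1 : Fin 2), (⟨j, hj⟩ : Fin (per S i))) := unProper_toProper _
  rw [midMap_of_one S _ (by rw [hup]), hup]
  exact hvc

lemma midMap_le_iff (hrk : IsRankFunction rk)
    (s t : (i : Fin (nc S)) × ProperPart (PolygonFL (per S i))) :
    midMap S s ≤ midMap S t ↔ s ≤ t := by
  obtain ⟨i, x⟩ := s
  obtain ⟨i', y⟩ := t
  constructor
  · intro h
    rcases fin2_cases (unProper x).1 with hx | hx <;>
      rcases fin2_cases (unProper y).1 with hy | hy
    · rw [midMap_of_zero S ⟨i, x⟩ hx, midMap_of_zero S ⟨i', y⟩ hy] at h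
      have heq : va S i ((unProper x).2 : ℕ) = va S i' ((unProper y).2 : ℕ) :=
        eq_of_le_of_rk_eq hrk h (by rw [va_rk S, va_rk S])
      have hi := comp_eq_of_va_eq S heq
      subst hi
      have hj := va_inj S i (Fin.is_lt _) (Fin.is_lt _) heq
      have hxy : x = y := proper_ext (Prod.ext (hx.trans hy.symm) (Fin.ext hj))
      rw [hxy]
    · rw [midMap_of_zero S ⟨i, x⟩ hx, midMap_of_one S ⟨i', y⟩ hy] at h
      have hne : va S i ((unProper x).2 : ℕ) ≠ vc S i' ((unProper y).2 : ℕ) := by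
        intro he
        have h1 := va_rk S i ((unProper x).2 : ℕ)
        rw [he, vc_rk S] at h1
        omega
      have hlt := lt_of_le_of_ne h hne
      have hi := comp_eq_of_lt S hlt
      subst hi
      have hor := (va_lt_vc_iff S i (Fin.is_lt _) (Fin.is_lt _)).mp hlt
      rw [Sigma.mk_le_mk_iff, proper_le_iff, polyMid_le_iff]
      refine Or.inr ⟨hx, hy, ?_⟩
      rcases hor with h2 | h2
      · exact Or.inl (Fin.ext h2)
      · exact Or.inr h2
    · rw [midMap_of_one S ⟨i, x⟩ hx, midMap_of_zero S ⟨i', y⟩ hy] at h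
      exfalso
      rcases lt_or_eq_of_le h with hlt | heq
      · have h1 := rk_lt_of_lt hrk hlt
        rw [vc_rk S, va_rk S] at h1
        omega
      · have h1 := vc_rk S i ((unProper x).2 : ℕ)
        rw [heq, va_rk S] at h1
        omega
    · rw [midMap_of_one S ⟨i, x⟩ hx, midMap_of_one S ⟨i', y⟩ hy] at h
      have heq : vc S i ((unProper x).2 : ℕ) = vc S i' ((unProper y).2 : ℕ) :=
        eq_of_le_of_rk_eq hrk h (by rw [vc_rk S, vc_rk S])
      have hi := comp_eq_of_vc_eq S heq
      subst hi
      have hj := vc_inj S i (Fin.is_lt _) (Fin.is_lt _) heq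
      have hxy : x = y := proper_ext (Prod.ext (hx.trans hy.symm) (Fin.ext hj))
      rw [hxy]
  · intro h
    have hii : i = i' := by cases h; rfl
    subst hii
    have hxy : x ≤ y := by rwa [Sigma.mk_le_mk_iff] at h
    rw [proper_le_iff, polyMid_le_iff] at hxy
    rcases hxy with heq | ⟨h0, h1, hor⟩
    · rw [proper_ext heq]
    · rw [midMap_of_zero S ⟨i, x⟩ h0, midMap_of_one S ⟨i, y⟩ h1]
      apply le_of_lt
      rw [va_lt_vc_iff S i (Fin.is_lt _) (Fin.is_lt _)]
      rcases hor with h2 | h2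
      · exact Or.inl (congrArg Fin.val h2)
      · exact Or.inr h2

/-- The full map from the polygon summation to the poset. -/
noncomputable def fullMap : FamSum (fun i : Fin (nc S) => PolygonFL (per S i)) → α :=
  WithBot.recBotCoe ⊥ (WithTop.recTopCoe ⊤ (midMap S))

lemma fullMap_bot : fullMap S (⊥ : FamSum (fun i : Fin (nc S) => PolygonFL (per S i))) = ⊥ := rfl

lemma fullMap_top :
    fullMap S (((⊤ : WithTop ((i : Fin (nc S)) × ProperPart (PolygonFL (per S i)))) :
      FamSum (fun i : Fin (nc S) => PolygonFL (per S i)))) = ⊤ := rfl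

lemma fullMap_mid (s : (i : Fin (nc S)) × ProperPart (PolygonFL (per S i))) :
    fullMap S (((s : WithTop ((i : Fin (nc S)) × ProperPart (PolygonFL (per S i)))) :
      FamSum (fun i : Fin (nc S) => PolygonFL (per S i)))) = midMap S s := rfl

lemma fullMap_bijective (hrk : IsRankFunction rk) (hrank : rk ⊤ = 3) :
    Function.Bijective (fullMap S) := by
  constructor
  · intro u v h
    induction u using WithBot.recBotCoe with
    | bot =>
      induction v using WithBot.recBotCoe with
      | bot => rfl
      | coe v =>
        induction v using WithTop.recTopCoe with
        | top => exact absurd (fullMap_bot S ▸ h) (alpha_bot_ne_top hrk hrank)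
        | coe s => exact absurd h.symm (midMap_ne_bot S hrk s)
    | coe u =>
      induction v using WithBot.recBotCoe with
      | bot =>
        induction u using WithTop.recTopCoe with
        | top => exact absurd h (alpha_bot_ne_top hrk hrank).symm
        | coe s => exact absurd h (midMap_ne_bot S hrk s)
      | coe v =>
        induction u using WithTop.recTopCoe with
        | top =>
          induction v using WithTop.recTopCoe with
          | top => rfl
          | coe t => exact absurd h.symm (midMap_ne_top S hrk hrank t)
        | coe s =>
          induction v using WithTop.recTopCoe with
          | top => exact absurd h (midMap_ne_top S hrk hrank s)
          | coe t => rw [midMap_inj S hrk h]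
  · intro x
    have hx3 := rk_le_three hrk hrank x
    interval_cases h : rk x
    · exact ⟨⊥, by rw [fullMap_bot, eq_bot_of_rk_eq_zero hrk h]⟩
    · obtain ⟨s, hs⟩ := midMap_surj_atom S h
      exact ⟨_, (fullMap_mid S s).trans hs⟩
    · obtain ⟨s, hs⟩ := midMap_surj_coatom S h
      exact ⟨_, (fullMap_mid S s).trans hs⟩
    · exact ⟨_, (fullMap_top S).trans (eq_top_of_rk_eq_three hrk hrank h).symm⟩

lemma fullMap_le_iff (hrk : IsRankFunction rk) (hrank : rk ⊤ = 3)
    (u v : FamSum (fun i : Fin (nc S) => PolygonFL (per S i))) :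
    fullMap S u ≤ fullMap S v ↔ u ≤ v := by
  induction u using WithBot.recBotCoe with
  | bot => simp [fullMap_bot, bot_le]
  | coe u =>
    induction v using WithBot.recBotCoe with
    | bot =>
      rw [fullMap_bot]
      apply iff_of_false
      · intro h
        induction u using WithTop.recTopCoe with
        | top =>
          exact (alpha_bot_ne_top hrk hrank) (le_bot_iff.mp h).symm
        | coe s =>
          exact midMap_ne_bot S hrk s (le_bot_iff.mp h)
      · exact WithBot.not_coe_le_bot u
    | coe v =>
      rw [WithBot.coe_le_coe]
      induction v using WithTop.recTopCoe with
      | top =>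
        apply iff_of_true
        · induction u using WithTop.recTopCoe with
          | top => exact le_refl _
          | coe s => exact le_top
        · exact le_top
      | coe t =>
        induction u using WithTop.recTopCoe with
        | top =>
          apply iff_of_false
          · intro h
            exact midMap_ne_top S hrk hrank t
              (by rw [← fullMap_mid S t]; exact top_le_iff.mp h)
          · intro h
            have h2 := top_le_iff.mp h
            exact WithTop.coe_ne_top h2
        | coe s =>
          rw [WithTop.coe_le_coe]
          exact midMap_le_iff S hrk s t

lemma finalIso (hrk : IsRankFunction rk) (hrank : rk ⊤ = 3) :
    Nonempty (α ≃o FamSum (fun i : Fin (nc S) => PolygonFL (per S i))) := by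
  refine ⟨OrderIso.symm ⟨Equiv.ofBijective _ (fullMap_bijective S hrk hrank), ?_⟩⟩
  intro a b
  exact fullMap_le_iff S hrk hrank a b

end Iso

end St2Aux

/-- An Eulerian binomial poset of rank `3` has `B 2 = 2`, `B 3 = 2 q` with
`q ≥ 2`, and is a summation of face lattices of polygons. -/
theorem statement2 {α : Type*} [Fintype α] [PartialOrder α] [BoundedOrder α]
    (rk : α → ℕ) (B : ℕ → ℕ) (hrk : IsRankFunction rk) (hB : IsBinomial rk B)
    (hE : IsEulerian rk) (hrank : rk ⊤ = 3) :
    B 2 = 2 ∧ ∃ q : ℕ, 2 ≤ q ∧ B 3 = 2 * q ∧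
      ∃ (r : ℕ) (qs : Fin r → ℕ), (∀ i, 2 ≤ qs i) ∧ (∑ i, qs i) = q ∧
        Nonempty (α ≃o FamSum fun i => PolygonFL (qs i)) := by
  have S : St2Aux.Setup rk := St2Aux.mkSetup hrk hB hE hrank
  refine ⟨St2Aux.B_two hrk hB hE hrank, Fintype.card {a : α // rk a = 1}, ?_, ?_,
    St2Aux.nc S, St2Aux.per S, St2Aux.per_two S, St2Aux.sum_per S,
    St2Aux.finalIso S hrk hrank⟩
  · obtain ⟨a, c, ha, -, -⟩ := St2Aux.exists_flag0 hrk hrank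
    have ha1 := (St2Aux.bot_covBy_iff hrk).mp ha
    obtain ⟨i, j, hj, -⟩ := St2Aux.atom_surj S ha1
    have h2 := St2Aux.per_two S i
    have h3 : St2Aux.per S i ≤ ∑ i', St2Aux.per S i' :=
      Finset.single_le_sum (fun _ _ => Nat.zero_le _) (Finset.mem_univ i)
    have h4 := St2Aux.sum_per S
    omega
  · rw [St2Aux.B_three hrk hB hrank, St2Aux.card_flags S]
end

section
/- Let P be a finite binomial poset of rank n with factorial function B(k) = 2^{k-1} for 1 ≤ k ≤ n. Then P is isomorphic to the butterfly poset T_n. -/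
open scoped Classical

/-- The face lattice `P_q` of a `q`-gon. -/
abbrev PolygonFaces (q : ℕ) : Type := WithBot (WithTop (PolyMid q))

section Statement3Aux

variable {α : Type*}

/-- Generalized saturated chains for an arbitrary relation. -/
def SatR (r : α → α → Prop) (x y : α) (l : List α) : Prop :=
  l.Chain' r ∧ l.head? = some x ∧ l.getLast? = some y

lemma satR_shape {r : α → α → Prop} {x y : α} {l : List α} (hl : SatR r x y l)
    (hne : x ≠ y) : ∃ w t, l = x :: w :: t := by
  obtain ⟨hc, hh, hg⟩ := hl
  match l with
  | [] => simp at hh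
  | [a] =>
    simp only [List.head?_cons, Option.some.injEq] at hh
    simp only [List.getLast?_singleton, Option.some.injEq] at hg
    exact absurd (hh.symm.trans hg) hne
  | a :: b :: t =>
    simp only [List.head?_cons, Option.some.injEq] at hh
    exact ⟨b, t, by rw [hh]⟩

noncomputable def satRSplit [Inhabited α] (r : α → α → Prop) (x y : α) (hne : x ≠ y) :
    {l : List α // SatR r x y l} ≃ (w : {w : α // r x w}) × {l : List α // SatR r w.1 y l} where
  toFun l :=
    ⟨⟨l.1.tail.headI, by
        obtain ⟨w, t, hw⟩ := satR_shape l.2 hne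
        have hc := l.2.1
        rw [hw] at hc ⊢
        exact (List.isChain_cons_cons.mp hc).1⟩,
      ⟨l.1.tail, by
        obtain ⟨w, t, hw⟩ := satR_shape l.2 hne
        have h2 := l.2
        rw [hw] at h2
        obtain ⟨hc, hh, hg⟩ := h2
        show SatR r l.1.tail.headI y l.1.tail
        rw [hw]
        exact ⟨(List.isChain_cons_cons.mp hc).2, rfl, by
          show (w :: t).getLast? = some y
          rw [← List.getLast?_cons_cons (a := x)]; exact hg⟩⟩⟩
  invFun p :=
    ⟨x :: p.2.1, by
      obtain ⟨⟨w, hw⟩, ⟨l, hl⟩⟩ := p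
      obtain ⟨hc, hh, hg⟩ := hl
      cases l with
      | nil => simp at hh
      | cons a t =>
        simp only [List.head?_cons, Option.some.injEq] at hh
        subst hh
        exact ⟨List.isChain_cons_cons.mpr ⟨hw, hc⟩, rfl, by
          rw [List.getLast?_cons_cons]; exact hg⟩⟩
  left_inv := by
    rintro ⟨l, hl⟩
    obtain ⟨w, t, hw⟩ := satR_shape hl hne
    apply Subtype.ext
    show x :: l.tail = l
    rw [hw]
    rfl
  right_inv := by
    rintro ⟨⟨w, hw⟩, ⟨l, hl⟩⟩
    have hh : l.headI = w := by
      obtain ⟨hc, hh, hg⟩ := hl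
      cases l with
      | nil => simp at hh
      | cons a t => simpa using hh
    subst hh
    rfl

lemma finite_satR [Finite α] {r : α → α → Prop} (hr : ∀ l : List α, l.Chain' r → l.Nodup)
    (x y : α) : Finite {l : List α // SatR r x y l} := by
  classical
  cases nonempty_fintype α
  exact Finite.of_injective
    (fun l => (⟨l.1, hr _ l.2.1⟩ : {l : List α // l.Nodup}))
    fun a b h => Subtype.ext (by have h2 := congrArg Subtype.val h; simpa using h2)

lemma satR_card [Fintype α] {r : α → α → Prop} (hr : ∀ l : List α, l.Chain' r → l.Nodup)
    (x y : α) (hne : x ≠ y) :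
    Nat.card {l : List α // SatR r x y l}
      = ∑ w : {w : α // r x w}, Nat.card {l : List α // SatR r w.1 y l} := by
  classical
  letI : Inhabited α := ⟨x⟩
  haveI : ∀ w : α, Finite {l : List α // SatR r w y l} := fun w => finite_satR hr w y
  haveI F : ∀ w : {w : α // r x w}, Fintype {l : List α // SatR r w.1 y l} :=
    fun w => Fintype.ofFinite _
  rw [Nat.card_congr (satRSplit r x y hne), Nat.card_eq_fintype_card, Fintype.card_sigma]
  exact Finset.sum_congr rfl fun w _ => (Nat.card_eq_fintype_card).symm

def satRReverse (r : α → α → Prop) (x y : α) :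
    {l : List α // SatR r x y l} ≃ {l : List α // SatR (flip r) y x l} where
  toFun l := ⟨l.1.reverse, by
    obtain ⟨hc, hh, hg⟩ := l.2
    refine ⟨?_, ?_, ?_⟩
    · exact List.isChain_reverse.mpr hc
    · rw [List.head?_reverse]; exact hg
    · rw [List.getLast?_reverse]; exact hh⟩
  invFun l := ⟨l.1.reverse, by
    obtain ⟨hc, hh, hg⟩ := l.2
    refine ⟨?_, ?_, ?_⟩
    · exact List.isChain_reverse.mpr hc
    · rw [List.head?_reverse]; exact hg
    · rw [List.getLast?_reverse]; exact hh⟩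
  left_inv l := Subtype.ext (List.reverse_reverse _)
  right_inv l := Subtype.ext (List.reverse_reverse _)

variable [PartialOrder α]

lemma chain'_covBy_nodup : ∀ l : List α, l.Chain' (· ⋖ ·) → l.Nodup := fun l h =>
  List.Pairwise.imp ne_of_lt
    (List.isChain_iff_pairwise.mp (h.imp fun a b hab => hab.lt))

lemma chain'_covBy_flip_nodup : ∀ l : List α, l.Chain' (flip (· ⋖ ·)) → l.Nodup := fun l h =>
  List.Pairwise.imp ne_of_gt
    (List.isChain_iff_pairwise.mp (h.imp fun a b hab => CovBy.lt hab))

lemma chainCount_decomp_head [Fintype α] (x y : α) (hne : x ≠ y) :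
    chainCount x y = ∑ w : {w : α // x ⋖ w}, chainCount w.1 y :=
  satR_card chain'_covBy_nodup x y hne

lemma chainCount_decomp_last [Fintype α] (x y : α) (hne : x ≠ y) :
    chainCount x y = ∑ w : {w : α // w ⋖ y}, chainCount x w.1 := by
  have h0 : chainCount x y = Nat.card {l : List α // SatR (flip (· ⋖ ·)) y x l} :=
    Nat.card_congr (satRReverse _ x y)
  rw [h0, satR_card chain'_covBy_flip_nodup y x hne.symm]
  exact Finset.sum_congr rfl fun w _ =>
    (Nat.card_congr (satRReverse (· ⋖ ·) x w.1)).symm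

end Statement3Aux

section Statement3Main

open Finset

variable {α : Type*} [Fintype α] [PartialOrder α] [BoundedOrder α]
  {rk : α → ℕ} {B : ℕ → ℕ} {n : ℕ}

lemma rk_lt_of_lt (hrk : IsRankFunction rk) {x y : α} (h : x < y) : rk x < rk y := by
  have main : ∀ y x : α, x < y → rk x < rk y := by
    intro y
    induction y using WellFoundedLT.induction with
    | ind y ih =>
      intro x hxy
      obtain ⟨w, hxw, hwy⟩ := hxy.exists_le_covby
      rw [hrk.2 w y hwy]
      rcases eq_or_lt_of_le hxw with rfl | hlt
      · omega
      · have := ih w hwy.lt x hlt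
        omega
  exact main y x h

lemma eq_of_le_rk_eq (hrk : IsRankFunction rk) {x y : α} (h : x ≤ y) (hr : rk x = rk y) :
    x = y := by
  rcases eq_or_lt_of_le h with rfl | hlt
  · rfl
  · exact absurd (rk_lt_of_lt hrk hlt) (by omega)

lemma rk_le_n (hrk : IsRankFunction rk) (hrank : rk (⊤:α) = n) (x : α) : rk x ≤ n := by
  rcases eq_or_lt_of_le (le_top (a := x)) with rfl | hlt
  · omega
  · have := rk_lt_of_lt hrk hlt; omega

lemma eq_bot_of_rk (hrk : IsRankFunction rk) {x : α} (h : rk x = 0) : x = ⊥ := by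
  by_contra hx
  have := rk_lt_of_lt hrk (Ne.bot_lt hx)
  rw [hrk.1] at this; omega

lemma eq_top_of_rk (hrk : IsRankFunction rk) (hrank : rk (⊤:α) = n) {x : α} (h : rk x = n) :
    x = ⊤ := by
  by_contra hx
  have := rk_lt_of_lt hrk (Ne.lt_top hx)
  omega

lemma two_pow_eq_mul {c m : ℕ} (h : 2 ^ (m + 1) = c * 2 ^ m) : c = 2 := by
  have hp : 0 < 2 ^ m := pow_pos (by norm_num) m
  have h2 : c * 2 ^ m = 2 * 2 ^ m := by rw [← h]; ring
  exact Nat.eq_of_mul_eq_mul_right hp h2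

/-- every element of rank `j+1` covers every element of rank `j`, `1 ≤ j < n`,
assuming level `j` has exactly two elements. -/
lemma covers_of_card (hrk : IsRankFunction rk) (hB : IsBinomial rk B)
    (hfact : ∀ k, 1 ≤ k → k ≤ n → B k = 2 ^ (k - 1)) {j : ℕ} (hj1 : 1 ≤ j) (hjn : j < n)
    (hcard : (Finset.univ.filter fun z : α => rk z = j).card = 2)
    {x z : α} (hx : rk x = j) (hz : rk z = j + 1) : x ⋖ z := by
  classical
  have hbz : (⊥:α) ≠ z := fun h => by rw [← h, hrk.1] at hz; omega
  have hdec := chainCount_decomp_last (⊥:α) z hbz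
  have hlhs : chainCount (⊥:α) z = 2 ^ j := by
    rw [hB ⊥ z bot_le, hrk.1, hz, Nat.sub_zero, hfact (j+1) (by omega) (by omega)]
    congr 1 <;> omega
  have hsum : ∀ w : {w : α // w ⋖ z}, chainCount (⊥:α) w.1 = 2 ^ (j - 1) := by
    intro w
    have hw : rk w.1 = j := by have := hrk.2 w.1 z w.2; omega
    rw [hB ⊥ w.1 bot_le, hrk.1, hw, Nat.sub_zero, hfact j hj1 (by omega)]
  have h2 : (2:ℕ) ^ j = (Finset.univ.filter fun w : α => w ⋖ z).card * 2 ^ (j - 1) := by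
    calc (2:ℕ) ^ j = chainCount (⊥:α) z := hlhs.symm
      _ = ∑ w : {w : α // w ⋖ z}, chainCount (⊥:α) w.1 := hdec
      _ = ∑ _w : {w : α // w ⋖ z}, 2 ^ (j - 1) := Finset.sum_congr rfl fun w _ => hsum w
      _ = Fintype.card {w : α // w ⋖ z} * 2 ^ (j - 1) := by
          rw [Finset.sum_const, Finset.card_univ, smul_eq_mul]
      _ = (Finset.univ.filter fun w : α => w ⋖ z).card * 2 ^ (j - 1) := by
          rw [Fintype.card_subtype]
  have hc2 : (Finset.univ.filter fun w : α => w ⋖ z).card = 2 := by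
    apply two_pow_eq_mul (m := j - 1)
    rw [show j - 1 + 1 = j by omega]
    exact h2
  have hsub : (Finset.univ.filter fun w : α => w ⋖ z)
      ⊆ (Finset.univ.filter fun w : α => rk w = j) := by
    intro w hw
    simp only [Finset.mem_filter, Finset.mem_univ, true_and] at hw ⊢
    have := hrk.2 w z hw; omega
  have heq := Finset.eq_of_subset_of_card_le hsub (by rw [hc2, hcard])
  have hxm : x ∈ (Finset.univ.filter fun w : α => w ⋖ z) := by
    rw [heq]; simp [hx]
  simpa using hxm

lemma level_card (hrk : IsRankFunction rk) (hB : IsBinomial rk B) (hrank : rk (⊤:α) = n)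
    (hfact : ∀ k, 1 ≤ k → k ≤ n → B k = 2 ^ (k - 1)) :
    ∀ j, 1 ≤ j → j < n → (Finset.univ.filter fun z : α => rk z = j).card = 2 := by
  classical
  intro j
  induction j with
  | zero => omega
  | succ j ih =>
    intro _ hn
    rcases Nat.eq_zero_or_pos j with rfl | hj
    · -- level 1
      have hbt : (⊥:α) ≠ ⊤ := fun h => by
        have h0 := hrk.1; rw [h] at h0; omega
      have hdec := chainCount_decomp_head (⊥:α) ⊤ hbt
      have hlhs : chainCount (⊥:α) ⊤ = 2 ^ (n - 1) := by
        rw [hB ⊥ ⊤ bot_le, hrk.1, hrank, Nat.sub_zero, hfact n (by omega) le_rfl]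
      have hsum : ∀ w : {w : α // (⊥:α) ⋖ w}, chainCount w.1 ⊤ = 2 ^ (n - 2) := by
        intro w
        have hw : rk w.1 = 1 := by have := hrk.2 ⊥ w.1 w.2; rw [hrk.1] at this; omega
        rw [hB w.1 ⊤ le_top, hrank, hw, hfact (n-1) (by omega) (by omega)]
        congr 1 <;> omega
      have h2 : (2:ℕ) ^ (n - 1) = (Finset.univ.filter fun w : α => (⊥:α) ⋖ w).card * 2 ^ (n - 2) := by
        calc (2:ℕ) ^ (n-1) = chainCount (⊥:α) ⊤ := hlhs.symm
          _ = ∑ w : {w : α // (⊥:α) ⋖ w}, chainCount w.1 ⊤ := hdec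
          _ = ∑ _w : {w : α // (⊥:α) ⋖ w}, 2 ^ (n - 2) := Finset.sum_congr rfl fun w _ => hsum w
          _ = Fintype.card {w : α // (⊥:α) ⋖ w} * 2 ^ (n - 2) := by
              rw [Finset.sum_const, Finset.card_univ, smul_eq_mul]
          _ = (Finset.univ.filter fun w : α => (⊥:α) ⋖ w).card * 2 ^ (n - 2) := by
              rw [Fintype.card_subtype]
      have hc2 : (Finset.univ.filter fun w : α => (⊥:α) ⋖ w).card = 2 := by
        apply two_pow_eq_mul (m := n - 2)
        rw [show n - 2 + 1 = n - 1 by omega]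
        exact h2
      have hset : (Finset.univ.filter fun w : α => (⊥:α) ⋖ w)
          = (Finset.univ.filter fun z : α => rk z = 0 + 1) := by
        apply Finset.ext
        intro w
        simp only [Finset.mem_filter, Finset.mem_univ, true_and]
        constructor
        · intro hw; have := hrk.2 ⊥ w hw; rw [hrk.1] at this; omega
        · intro hw
          have hwb : w ≠ ⊥ := fun h => by rw [h, hrk.1] at hw; omega
          obtain ⟨u, hu, huw⟩ := (Ne.bot_lt hwb).exists_covby_le
          have hru : rk u = 1 := by have := hrk.2 ⊥ u hu; rw [hrk.1] at this; omega
          have : u = w := eq_of_le_rk_eq hrk huw (by omega)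
          rwa [this] at hu
      rw [← hset]; exact hc2
    · -- inductive step
      have hcardj := ih hj (by omega)
      have hne : (Finset.univ.filter fun z : α => rk z = j).Nonempty := by
        rw [← Finset.card_pos, hcardj]; omega
      obtain ⟨x, hxm⟩ := hne
      have hx : rk x = j := by simpa using hxm
      have hxt : x ≠ ⊤ := fun h => by rw [h, hrank] at hx; omega
      have hdec := chainCount_decomp_head x ⊤ hxt
      have hlhs : chainCount x ⊤ = 2 ^ (n - j - 1) := by
        rw [hB x ⊤ le_top, hrank, hx, hfact (n-j) (by omega) (by omega)]
      have hsum : ∀ w : {w : α // x ⋖ w}, chainCount w.1 ⊤ = 2 ^ (n - j - 2) := by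
        intro w
        have hw : rk w.1 = j + 1 := by have := hrk.2 x w.1 w.2; omega
        rw [hB w.1 ⊤ le_top, hrank, hw, hfact (n-(j+1)) (by omega) (by omega)]
        congr 1 <;> omega
      have h2 : (2:ℕ) ^ (n - j - 1)
          = (Finset.univ.filter fun w : α => x ⋖ w).card * 2 ^ (n - j - 2) := by
        calc (2:ℕ) ^ (n-j-1) = chainCount x ⊤ := hlhs.symm
          _ = ∑ w : {w : α // x ⋖ w}, chainCount w.1 ⊤ := hdec
          _ = ∑ _w : {w : α // x ⋖ w}, 2 ^ (n - j - 2) := Finset.sum_congr rfl fun w _ => hsum w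
          _ = Fintype.card {w : α // x ⋖ w} * 2 ^ (n - j - 2) := by
              rw [Finset.sum_const, Finset.card_univ, smul_eq_mul]
          _ = (Finset.univ.filter fun w : α => x ⋖ w).card * 2 ^ (n - j - 2) := by
              rw [Fintype.card_subtype]
      have hc2 : (Finset.univ.filter fun w : α => x ⋖ w).card = 2 := by
        apply two_pow_eq_mul (m := n - j - 2)
        rw [show n - j - 2 + 1 = n - j - 1 by omega]
        exact h2
      have hset : (Finset.univ.filter fun w : α => x ⋖ w)
          = (Finset.univ.filter fun z : α => rk z = j + 1) := by
        apply Finset.ext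
        intro w
        simp only [Finset.mem_filter, Finset.mem_univ, true_and]
        constructor
        · intro hw; have := hrk.2 x w hw; omega
        · intro hw
          exact covers_of_card hrk hB hfact hj (by omega) hcardj hx hw
      rw [← hset]; exact hc2

lemma lt_of_rk_lt (hrk : IsRankFunction rk) (hB : IsBinomial rk B) (hrank : rk (⊤:α) = n)
    (hfact : ∀ k, 1 ≤ k → k ≤ n → B k = 2 ^ (k - 1)) {x y : α} (h : rk x < rk y) : x < y := by
  have main : ∀ d : ℕ, ∀ x y : α, rk y = rk x + d + 1 → x < y := by
    intro d
    induction d with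
    | zero =>
      intro x y hxy
      rcases Nat.eq_zero_or_pos (rk x) with h0 | h0
      · have hxbot : x = ⊥ := eq_bot_of_rk hrk h0
        have hyb : y ≠ ⊥ := fun hy => by rw [hy, hrk.1] at hxy; omega
        rw [hxbot]; exact Ne.bot_lt hyb
      · have hxn : rk x < n := by have := rk_le_n hrk hrank y; omega
        have hcard := level_card hrk hB hrank hfact (rk x) h0 hxn
        exact (covers_of_card hrk hB hfact h0 hxn hcard rfl (by omega)).lt
    | succ d ih =>
      intro x y hxy
      have hm1 : 1 ≤ rk x + d + 1 := by omega
      have hmn : rk x + d + 1 < n := by have := rk_le_n hrk hrank y; omega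
      have hcardm := level_card hrk hB hrank hfact (rk x + d + 1) hm1 hmn
      have hne : (Finset.univ.filter fun z : α => rk z = rk x + d + 1).Nonempty := by
        rw [← Finset.card_pos, hcardm]; omega
      obtain ⟨z, hzm⟩ := hne
      have hz : rk z = rk x + d + 1 := by simpa using hzm
      have h1 : x < z := ih x z (by omega)
      have h2 : z ⋖ y := covers_of_card hrk hB hfact hm1 hmn hcardm hz (by omega)
      exact h1.trans h2.lt
  exact main (rk y - rk x - 1) x y (by omega)

end Statement3Main

/-- A binomial poset of rank `n` with `B k = 2 ^ (k - 1)` is isomorphic to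
the butterfly poset `T n`. -/
theorem statement3 {α : Type*} [Fintype α] [PartialOrder α] [BoundedOrder α]
    (rk : α → ℕ) (B : ℕ → ℕ) (n : ℕ) (hrk : IsRankFunction rk) (hB : IsBinomial rk B)
    (hrank : rk ⊤ = n) (hfact : ∀ k, 1 ≤ k → k ≤ n → B k = 2 ^ (k - 1)) :
    Nonempty (α ≃o Butterfly n) := by
  classical
  have hrkle : ∀ x : α, rk x ≤ n := rk_le_n hrk hrank
  have hle_iff : ∀ x y : α, x ≤ y ↔ x = y ∨ rk x < rk y := by
    intro x y
    constructor
    · intro h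
      rcases eq_or_lt_of_le h with rfl | hlt
      · exact Or.inl rfl
      · exact Or.inr (rk_lt_of_lt hrk hlt)
    · rintro (rfl | h)
      · exact le_rfl
      · exact (lt_of_rk_lt hrk hB hrank hfact h).le
  set pick : ℕ → α := fun j =>
    if h : (Finset.univ.filter fun z : α => rk z = j).Nonempty then h.choose else ⊥ with hpickdef
  have hpick : ∀ j, 1 ≤ j → j < n → pick j ∈ Finset.univ.filter fun z : α => rk z = j := by
    intro j h1 h2
    have hne : (Finset.univ.filter fun z : α => rk z = j).Nonempty := by
      rw [← Finset.card_pos, level_card hrk hB hrank hfact j h1 h2]; omega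
    rw [hpickdef]
    simp only [dif_pos hne]
    exact hne.choose_spec
  have hpickrk : ∀ j, 1 ≤ j → j < n → rk (pick j) = j := by
    intro j h1 h2
    have := hpick j h1 h2
    simpa using this
  have hlt : ∀ x : α, rk x < n + 1 := fun x => by have := hrkle x; omega
  set f : α → Butterfly n := fun x =>
    ⟨(⟨rk x, hlt x⟩, if x = pick (rk x) ∨ rk x = 0 ∨ rk x = n then 0 else 1), by
      intro h
      exact if_pos (Or.inr h)⟩ with hfdef
  have hfrk : ∀ x : α, ((f x).1.1 : ℕ) = rk x := fun x => rfl
  have hfsnd : ∀ x : α,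
      (f x).1.2 = if x = pick (rk x) ∨ rk x = 0 ∨ rk x = n then 0 else 1 := fun x => rfl
  have hinj : Function.Injective f := by
    intro x y hxy
    have hr : rk x = rk y := by
      have := congrArg (fun p : Butterfly n => (p.1.1 : ℕ)) hxy
      simpa [hfrk] using this
    have hi : (f x).1.2 = (f y).1.2 := congrArg (fun p : Butterfly n => p.1.2) hxy
    by_cases h0 : rk x = 0
    · have hy0 : rk y = 0 := by omega
      rw [eq_bot_of_rk hrk h0, eq_bot_of_rk hrk hy0]
    by_cases hn : rk x = n
    · have hyn : rk y = n := by omega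
      rw [eq_top_of_rk hrk hrank hn, eq_top_of_rk hrk hrank hyn]
    rw [hfsnd, hfsnd, ← hr] at hi
    by_cases hx : x = pick (rk x) <;> by_cases hy : y = pick (rk x)
    · exact hx.trans hy.symm
    · rw [if_pos (Or.inl hx), if_neg (by push_neg; exact ⟨hy, h0, hn⟩)] at hi
      exact absurd hi (by decide)
    · rw [if_neg (by push_neg; exact ⟨hx, h0, hn⟩), if_pos (Or.inl hy)] at hi
      exact absurd hi (by decide)
    · -- both differ from pick (rk x); use that the level has two elements
      have h1 : 1 ≤ rk x := by omega
      have h2 : rk x < n := by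
        rcases Nat.lt_or_ge (rk x) n with h | h
        · exact h
        · exact absurd (le_antisymm (hrkle x) h) hn
      obtain ⟨a, b, hab, hS⟩ :=
        Finset.card_eq_two.mp (level_card hrk hB hrank hfact (rk x) h1 h2)
      have hxm : x ∈ ({a, b} : Finset α) := by
        rw [← hS]; simp
      have hym : y ∈ ({a, b} : Finset α) := by
        rw [← hS]; simp [← hr]
      have hpm : pick (rk x) ∈ ({a, b} : Finset α) := by
        rw [← hS]; exact hpick (rk x) h1 h2
      simp only [Finset.mem_insert, Finset.mem_singleton] at hxm hym hpm
      rcases hxm with rfl | rfl <;> rcases hym with rfl | rfl <;> rcases hpm with hp | hp <;>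
        first | rfl | (exact absurd hp.symm hx) | (exact absurd hp.symm hy) |
          (exact absurd rfl hx) | (exact absurd rfl hy)
  have hsurj : Function.Surjective f := by
    rintro ⟨⟨j, i⟩, hp⟩
    by_cases h0 : (j : ℕ) = 0
    · refine ⟨⊥, Subtype.ext (Prod.ext ?_ ?_)⟩
      · exact Fin.ext (by simpa [hfrk, hrk.1] using h0.symm)
      · show (if (⊥:α) = pick (rk (⊥:α)) ∨ rk (⊥:α) = 0 ∨ rk (⊥:α) = n then (0 : Fin 2) else 1) = i
        rw [if_pos (Or.inr (Or.inl hrk.1))]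
        exact (hp (Or.inl h0)).symm
    by_cases hn : (j : ℕ) = n
    · refine ⟨⊤, Subtype.ext (Prod.ext ?_ ?_)⟩
      · exact Fin.ext (by simpa [hfrk, hrank] using hn.symm)
      · show (if (⊤:α) = pick (rk (⊤:α)) ∨ rk (⊤:α) = 0 ∨ rk (⊤:α) = n then (0 : Fin 2) else 1) = i
        rw [if_pos (Or.inr (Or.inr hrank))]
        exact (hp (Or.inr hn)).symm
    · have h1 : 1 ≤ (j : ℕ) := by omega
      have h2 : (j : ℕ) < n := by
        have := j.isLt; omega
      have hpj : rk (pick (j : ℕ)) = (j : ℕ) := hpickrk _ h1 h2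
      have hi2 : i = 0 ∨ i = 1 := by omega
      rcases hi2 with rfl | rfl
      · refine ⟨pick (j : ℕ), Subtype.ext (Prod.ext ?_ ?_)⟩
        · exact Fin.ext (by simpa using hpj)
        · show (if pick (j:ℕ) = pick (rk (pick (j:ℕ))) ∨ rk (pick (j:ℕ)) = 0 ∨ rk (pick (j:ℕ)) = n
              then (0 : Fin 2) else 1) = 0
          rw [if_pos (Or.inl (by rw [hpj]))]
      · obtain ⟨a, b, hab, hS⟩ :=
          Finset.card_eq_two.mp (level_card hrk hB hrank hfact (j : ℕ) h1 h2)
        have hpm : pick (j:ℕ) ∈ ({a, b} : Finset α) := by rw [← hS]; exact hpick _ h1 h2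
        simp only [Finset.mem_insert, Finset.mem_singleton] at hpm
        have key : ∃ c, rk c = (j : ℕ) ∧ c ≠ pick (j : ℕ) := by
          rcases hpm with hp | hp
          · refine ⟨b, ?_, by rw [hp]; exact hab.symm⟩
            have : b ∈ ({a, b} : Finset α) := by simp
            rw [← hS] at this; simpa using this
          · refine ⟨a, ?_, by rw [hp]; exact hab⟩
            have : a ∈ ({a, b} : Finset α) := by simp
            rw [← hS] at this; simpa using this
        obtain ⟨c, hc, hcp⟩ := key
        refine ⟨c, Subtype.ext (Prod.ext ?_ ?_)⟩
        · exact Fin.ext (by simpa using hc)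
        · show (if c = pick (rk c) ∨ rk c = 0 ∨ rk c = n then (0 : Fin 2) else 1) = 1
          rw [if_neg (by push_neg; exact ⟨by rw [hc]; exact hcp, by omega, by omega⟩)]
  refine ⟨{ toEquiv := Equiv.ofBijective f ⟨hinj, hsurj⟩, map_rel_iff' := ?_ }⟩
  intro x y
  show f x ≤ f y ↔ x ≤ y
  have hb : f x ≤ f y ↔ (f x = f y ∨ ((f x).1.1 : ℕ) < ((f y).1.1 : ℕ)) := Iff.rfl
  rw [hb, hfrk, hfrk, hle_iff, hinj.eq_iff]
end

section
/- Let P be a finite Eulerian binomial poset of rank n with factorial function B(k) = k! for 1 ≤ k ≤ n. Then P is isomorphic to the boolean lattice B_n. -/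
open scoped Classical

/-! ### Auxiliary development for `statement4` -/

set_option linter.unusedSectionVars false

namespace Statement4Aux

variable {α : Type*} [PartialOrder α]

lemma chain_head_le_last : ∀ {l : List α}, l.Chain' (· ⋖ ·) → ∀ {x y : α},
    l.head? = some x → l.getLast? = some y → x ≤ y := by
  intro l
  induction l with
  | nil => intro _ x y hx _; simp at hx
  | cons a t ih =>
    intro hc x y hx hy
    have hxa : a = x := by simpa using hx
    subst hxa
    cases t with
    | nil =>
      have : a = y := by simpa using hy
      exact this.le
    | cons b t' =>
      have h1 : a ⋖ b := (List.isChain_cons_cons.1 hc).1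
      have h2 : (b :: t').Chain' (· ⋖ ·) := (List.isChain_cons_cons.1 hc).2
      have hy' : (b :: t').getLast? = some y := by
        rwa [List.getLast?_cons_cons] at hy
      exact h1.le.trans (ih h2 rfl hy')

lemma satChain_ne_nil {x y : α} {l : List α} (h : IsSatChain x y l) : l ≠ [] := by
  intro e; subst e; simp [IsSatChain] at h

lemma satChain_le {x y : α} {l : List α} (h : IsSatChain x y l) : x ≤ y :=
  chain_head_le_last h.1 h.2.1 h.2.2

lemma satChain_cases {x y : α} {l : List α} (h : IsSatChain x y l) :
    (x = y ∧ l = [x]) ∨ ∃ z t, l = x :: z :: t ∧ x ⋖ z ∧ IsSatChain z y (z :: t) := by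
  obtain ⟨hc, hh, hg⟩ := h
  cases l with
  | nil => simp at hh
  | cons a t =>
    have hxa : a = x := by simpa using hh
    subst hxa
    cases t with
    | nil =>
      left
      have : a = y := by simpa using hg
      exact ⟨this, rfl⟩
    | cons b t' =>
      right
      refine ⟨b, t', rfl, (List.isChain_cons_cons.1 hc).1,
        (List.isChain_cons_cons.1 hc).2, rfl, ?_⟩
      rwa [List.getLast?_cons_cons] at hg

lemma satChain_cons {x z y : α} {l : List α} (hxz : x ⋖ z) (h : IsSatChain z y l) :
    IsSatChain x y (x :: l) := by
  obtain ⟨hc, hh, hg⟩ := h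
  refine ⟨List.isChain_cons.2 ⟨fun w hw => ?_, hc⟩, rfl, ?_⟩
  · rw [hh] at hw; exact (Option.mem_some_iff.1 hw) ▸ hxz
  · cases l with
    | nil => simp at hh
    | cons b t => rw [List.getLast?_cons_cons]; exact hg

lemma satChain_concat {x w y : α} {l : List α} (hwy : w ⋖ y) (h : IsSatChain x w l) :
    IsSatChain x y (l ++ [y]) := by
  obtain ⟨hc, hh, hg⟩ := h
  refine ⟨List.IsChain.append hc (List.isChain_singleton y) ?_, ?_, List.getLast?_concat⟩
  · intro u hu v hv
    have hu' : u = w := by rw [hg] at hu; simpa using hu.symm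
    have hv' : v = y := by simpa using hv.symm
    rw [hu', hv']; exact hwy
  · rw [List.head?_append_of_ne_nil _ (satChain_ne_nil ⟨hc, hh, hg⟩)]; exact hh

lemma chainCount_self (x : α) : chainCount x x = 1 := by
  rw [chainCount, Nat.card_eq_one_iff_unique]
  constructor
  · constructor
    rintro ⟨l₁, h₁⟩ ⟨l₂, h₂⟩
    have e₁ : l₁ = [x] := by
      rcases satChain_cases h₁ with ⟨_, hl⟩ | ⟨z, t, _, hxz, hzt⟩
      · exact hl
      · exact absurd (lt_of_lt_of_le hxz.lt (satChain_le hzt)) (lt_irrefl x)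
    have e₂ : l₂ = [x] := by
      rcases satChain_cases h₂ with ⟨_, hl⟩ | ⟨z, t, _, hxz, hzt⟩
      · exact hl
      · exact absurd (lt_of_lt_of_le hxz.lt (satChain_le hzt)) (lt_irrefl x)
    exact Subtype.ext (e₁.trans e₂.symm)
  · exact ⟨⟨[x], List.isChain_singleton x, rfl, rfl⟩⟩

instance satChainFinite [Fintype α] (x y : α) : Finite {l : List α // IsSatChain x y l} := by
  haveI : IsTrans α (· < ·) := ⟨fun _ _ _ => lt_trans⟩
  haveI : IsAntisymm α (· < ·) := ⟨fun a b h₁ h₂ => absurd h₂ (asymm h₁)⟩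
  apply Finite.of_injective (fun l : {l : List α // IsSatChain x y l} => l.1.toFinset)
  rintro ⟨l₁, h₁⟩ ⟨l₂, h₂⟩ h
  simp only at h
  have s₁ : l₁.Pairwise (· < ·) :=
    List.isChain_iff_pairwise.1 (h₁.1.imp fun _ _ hab => hab.lt)
  have s₂ : l₂.Pairwise (· < ·) :=
    List.isChain_iff_pairwise.1 (h₂.1.imp fun _ _ hab => hab.lt)
  have n₁ : l₁.Nodup := s₁.imp ne_of_lt
  have n₂ : l₂.Nodup := s₂.imp ne_of_lt
  exact Subtype.ext (List.Perm.eq_of_pairwise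
    (fun a b _ _ h1 h2 => absurd h2 (asymm h1)) s₁ s₂ (List.perm_of_nodup_nodup_toFinset_eq n₁ n₂ h))

variable [Fintype α]

/-- The set of "atoms" of an interval: elements covering `x` and below `y`. -/
noncomputable def covF (x y : α) : Finset α := Finset.univ.filter fun z => x ⋖ z ∧ z ≤ y

/-- The set of "coatoms" of an interval: elements above `x` covered by `y`. -/
noncomputable def coaF (x y : α) : Finset α := Finset.univ.filter fun w => x ≤ w ∧ w ⋖ y

lemma mem_covF {x y z : α} : z ∈ covF x y ↔ x ⋖ z ∧ z ≤ y := by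
  simp [covF]

lemma mem_coaF {x y w : α} : w ∈ coaF x y ↔ x ≤ w ∧ w ⋖ y := by
  simp [coaF]

lemma chainCount_eq_sum_head {x y : α} (hxy : x < y) :
    chainCount x y = ∑ z ∈ covF x y, chainCount z y := by
  classical
  have hg : Function.Bijective
      (fun p : (Σ z : {z : α // z ∈ covF x y}, {l : List α // IsSatChain z.1 y l}) =>
        (⟨x :: p.2.1, satChain_cons (mem_covF.1 p.1.2).1 p.2.2⟩ :
          {l : List α // IsSatChain x y l})) := by
    constructor
    · rintro ⟨⟨z₁, hz₁⟩, l₁, hl₁⟩ ⟨⟨z₂, hz₂⟩, l₂, hl₂⟩ h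
      have hll : l₁ = l₂ := by
        have := Subtype.ext_iff.1 h
        simpa using this
      subst hll
      have hz : z₁ = z₂ := Option.some.inj ((hl₁.2.1).symm.trans hl₂.2.1)
      subst hz
      rfl
    · rintro ⟨l, hl⟩
      rcases satChain_cases hl with ⟨hxy', _⟩ | ⟨z, t, rfl, hxz, hzt⟩
      · exact absurd hxy' hxy.ne
      · exact ⟨⟨⟨z, mem_covF.2 ⟨hxz, (satChain_le hzt)⟩⟩, ⟨z :: t, hzt⟩⟩, rfl⟩
  have h1 := Nat.card_eq_of_bijective _ hg
  letI : ∀ z : {z : α // z ∈ covF x y}, Fintype {l : List α // IsSatChain z.1 y l} :=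
    fun _ => Fintype.ofFinite _
  rw [chainCount, ← h1, Nat.card_eq_fintype_card, Fintype.card_sigma]
  have h2 : ∀ z : {z : α // z ∈ covF x y},
      Fintype.card {l : List α // IsSatChain z.1 y l} = chainCount z.1 y :=
    fun _ => Nat.card_eq_fintype_card.symm
  simp_rw [h2]
  rw [Finset.univ_eq_attach, Finset.sum_attach (covF x y) (fun z => chainCount z y)]

lemma chainCount_eq_sum_last {x y : α} (hxy : x < y) :
    chainCount x y = ∑ w ∈ coaF x y, chainCount x w := by
  classical
  have hg : Function.Bijective
      (fun p : (Σ w : {w : α // w ∈ coaF x y}, {l : List α // IsSatChain x w.1 l}) =>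
        (⟨p.2.1 ++ [y], satChain_concat (mem_coaF.1 p.1.2).2 p.2.2⟩ :
          {l : List α // IsSatChain x y l})) := by
    constructor
    · rintro ⟨⟨w₁, hw₁⟩, l₁, hl₁⟩ ⟨⟨w₂, hw₂⟩, l₂, hl₂⟩ h
      have hll : l₁ = l₂ := List.append_cancel_right (Subtype.ext_iff.1 h)
      subst hll
      have hw : w₁ = w₂ := Option.some.inj ((hl₁.2.2).symm.trans hl₂.2.2)
      subst hw
      rfl
    · rintro ⟨l, hl⟩
      have hne := satChain_ne_nil hl
      have hly : l.getLast hne = y := by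
        have := hl.2.2
        rw [List.getLast?_eq_getLast hne] at this
        exact Option.some.inj this
      have hdl : l.dropLast ++ [y] = l := by
        rw [← hly]; exact List.dropLast_append_getLast hne
      have ht : l.dropLast ≠ [] := by
        intro h0
        rw [h0] at hdl
        have : l = [y] := hdl.symm
        rw [this] at hl
        have : y = x := by simpa using hl.2.1
        exact hxy.ne this.symm
      have hch : (l.dropLast ++ [y]).Chain' (· ⋖ ·) := by rw [hdl]; exact hl.1
      have hc3 := List.isChain_append.1 hch
      have hw : l.dropLast.getLast? = some (l.dropLast.getLast ht) :=
        List.getLast?_eq_getLast ht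
      have hwy : l.dropLast.getLast ht ⋖ y := hc3.2.2 _ hw y rfl
      have hhead : l.dropLast.head? = some x := by
        have := hl.2.1
        rw [← hdl, List.head?_append_of_ne_nil _ ht] at this
        exact this
      have hsc : IsSatChain x (l.dropLast.getLast ht) l.dropLast := ⟨hc3.1, hhead, hw⟩
      exact ⟨⟨⟨l.dropLast.getLast ht, mem_coaF.2 ⟨(satChain_le hsc), hwy⟩⟩, ⟨l.dropLast, hsc⟩⟩,
        Subtype.ext hdl⟩
  have h1 := Nat.card_eq_of_bijective _ hg
  letI : ∀ w : {w : α // w ∈ coaF x y}, Fintype {l : List α // IsSatChain x w.1 l} :=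
    fun _ => Fintype.ofFinite _
  rw [chainCount, ← h1, Nat.card_eq_fintype_card, Fintype.card_sigma]
  have h2 : ∀ w : {w : α // w ∈ coaF x y},
      Fintype.card {l : List α // IsSatChain x w.1 l} = chainCount x w.1 :=
    fun _ => Nat.card_eq_fintype_card.symm
  simp_rw [h2]
  rw [Finset.univ_eq_attach, Finset.sum_attach (coaF x y) (fun w => chainCount x w)]

section Rank

variable {α : Type*} [Fintype α] [PartialOrder α] [BoundedOrder α]
  {rk : α → ℕ} {n : ℕ}

lemma rk_satChain (hrk : IsRankFunction rk) : ∀ {l : List α}, l.Chain' (· ⋖ ·) →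
    ∀ {x y : α}, l.head? = some x → l.getLast? = some y → rk y + 1 = rk x + l.length := by
  intro l
  induction l with
  | nil => intro _ x y hx _; simp at hx
  | cons a t ih =>
    intro hc x y hx hy
    have hxa : a = x := by simpa using hx
    subst hxa
    cases t with
    | nil =>
      have : a = y := by simpa using hy
      subst this; simp
    | cons b t' =>
      have h1 : a ⋖ b := (List.isChain_cons_cons.1 hc).1
      have h2 : (b :: t').Chain' (· ⋖ ·) := (List.isChain_cons_cons.1 hc).2
      have hy' : (b :: t').getLast? = some y := by
        rwa [List.getLast?_cons_cons] at hy
      have hih := ih h2 rfl hy'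
      have hr : rk b = rk a + 1 := hrk.2 a b h1
      simp only [List.length_cons] at hih ⊢
      omega

lemma exists_satChain : ∀ {x y : α}, x ≤ y → ∃ l, IsSatChain x y l := by
  classical
  have key : ∀ (N : ℕ) (x y : α), x ≤ y →
      (Finset.univ.filter fun z => x ≤ z ∧ z ≤ y).card ≤ N → ∃ l, IsSatChain x y l := by
    intro N
    induction N with
    | zero =>
      intro x y hxy hcard
      exfalso
      have : x ∈ Finset.univ.filter fun z => x ≤ z ∧ z ≤ y := by simp [hxy]
      have := Finset.card_pos.2 ⟨x, this⟩
      omega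
    | succ N ih =>
      intro x y hxy hcard
      rcases eq_or_lt_of_le hxy with rfl | hlt
      · exact ⟨[x], List.isChain_singleton x, rfl, rfl⟩
      · have hS : (Finset.univ.filter fun z => x < z ∧ z ≤ y).Nonempty :=
          ⟨y, by simp [hlt]⟩
        obtain ⟨z, hz, hmin'⟩ := Finset.exists_minimal hS
        replace hz : z ∈ Finset.univ.filter fun z => x < z ∧ z ≤ y := hz
        have hmin : ∀ w ∈ Finset.univ.filter fun z => x < z ∧ z ≤ y, ¬ w < z :=
          fun w hw hwz => lt_irrefl z (lt_of_le_of_lt (hmin' hw hwz.le) hwz)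
        rw [Finset.mem_filter] at hz
        have hxz : x ⋖ z := by
          refine ⟨hz.2.1, fun w hw hwz => ?_⟩
          exact hmin w (by simp [hw, hwz.le.trans hz.2.2]) hwz
        have hsub : (Finset.univ.filter fun w => z ≤ w ∧ w ≤ y) ⊂
            (Finset.univ.filter fun w => x ≤ w ∧ w ≤ y) := by
          refine (Finset.ssubset_iff_of_subset ?_).2 ⟨x, by simp [hxy], ?_⟩
          · intro w hw
            rw [Finset.mem_filter] at hw ⊢
            exact ⟨Finset.mem_univ w, (hxz.lt.le.trans hw.2.1), hw.2.2⟩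
          · simp only [Finset.mem_filter, Finset.mem_univ, true_and, not_and]
            intro hzx
            exact absurd (hzx.trans_lt hxz.lt) (lt_irrefl z)
        obtain ⟨l, hl⟩ := ih z y hz.2.2 (by
          have := Finset.card_lt_card hsub
          omega)
        exact ⟨x :: l, satChain_cons hxz hl⟩
  intro x y hxy
  exact key _ x y hxy le_rfl

lemma rk_mono (hrk : IsRankFunction rk) {x y : α} (hxy : x ≤ y) : rk x ≤ rk y := by
  obtain ⟨l, hl⟩ := exists_satChain hxy
  have := rk_satChain hrk hl.1 hl.2.1 hl.2.2
  have hpos : 0 < l.length := List.length_pos_iff.2 (satChain_ne_nil hl)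
  omega

lemma rk_lt (hrk : IsRankFunction rk) {x y : α} (hxy : x < y) : rk x < rk y := by
  obtain ⟨l, hl⟩ := exists_satChain hxy.le
  have hlen := rk_satChain hrk hl.1 hl.2.1 hl.2.2
  rcases satChain_cases hl with ⟨hxy', _⟩ | ⟨z, t, rfl, hxz, hzt⟩
  · exact absurd hxy' hxy.ne
  · simp only [List.length_cons] at hlen
    omega

lemma eq_of_rk (hrk : IsRankFunction rk) {x y : α} (hxy : x ≤ y) (h : rk y ≤ rk x) :
    x = y := by
  rcases eq_or_lt_of_le hxy with rfl | hlt
  · rfl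
  · exact absurd (rk_lt hrk hlt) (by omega)

lemma covby_of_rk (hrk : IsRankFunction rk) {x y : α} (hxy : x < y)
    (h : rk y ≤ rk x + 1) : x ⋖ y := by
  refine ⟨hxy, fun c hc hcy => ?_⟩
  have h1 := rk_lt hrk hc
  have h2 := rk_lt hrk hcy
  omega

/-- Bundled chain-count hypothesis. -/
lemma cc_fact (hrk : IsRankFunction rk) (hrank : rk (⊤ : α) = n) {B : ℕ → ℕ}
    (hB : IsBinomial rk B) (hfact : ∀ k, 1 ≤ k → k ≤ n → B k = Nat.factorial k)
    {x y : α} (hxy : x ≤ y) : chainCount x y = Nat.factorial (rk y - rk x) := by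
  rcases eq_or_lt_of_le hxy with rfl | hlt
  · rw [chainCount_self, Nat.sub_self, Nat.factorial_zero]
  · have h1 : 1 ≤ rk y - rk x := by have := rk_lt hrk hlt; omega
    have h2 : rk y - rk x ≤ n := by
      have := rk_mono hrk (le_top : y ≤ ⊤)
      omega
    rw [hB x y hxy, hfact _ h1 h2]

section Counting

variable (hrk : IsRankFunction rk)
  (hcc : ∀ x y : α, x ≤ y → chainCount x y = Nat.factorial (rk y - rk x))

include hrk hcc

lemma card_covF {x y : α} (hxy : x ≤ y) : (covF x y).card = rk y - rk x := by
  rcases eq_or_lt_of_le hxy with rfl | hlt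
  · rw [Nat.sub_self]
    rw [Finset.card_eq_zero, Finset.eq_empty_iff_forall_notMem]
    intro z hz
    rw [mem_covF] at hz
    exact absurd (hz.2.trans_lt hz.1.lt) (lt_irrefl z)
  · set m := rk y - rk x with hm
    have hm1 : 1 ≤ m := by have := rk_lt hrk hlt; omega
    have h1 := chainCount_eq_sum_head hlt
    have h2 : ∀ z ∈ covF x y, chainCount z y = Nat.factorial (m - 1) := by
      intro z hz
      rw [mem_covF] at hz
      rw [hcc z y hz.2]
      congr 1
      have hz1 : rk z = rk x + 1 := hrk.2 x z hz.1
      have := rk_lt hrk hlt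
      omega
    rw [Finset.sum_congr rfl h2, Finset.sum_const, smul_eq_mul, hcc x y hxy, ← hm] at h1
    have hms : m = (m - 1) + 1 := by omega
    rw [hms, Nat.factorial_succ] at h1
    have := Nat.eq_of_mul_eq_mul_right (Nat.factorial_pos (m - 1)) h1
    omega

lemma card_coaF {x y : α} (hxy : x ≤ y) : (coaF x y).card = rk y - rk x := by
  rcases eq_or_lt_of_le hxy with rfl | hlt
  · rw [Nat.sub_self]
    rw [Finset.card_eq_zero, Finset.eq_empty_iff_forall_notMem]
    intro z hz
    rw [mem_coaF] at hz
    exact absurd (hz.1.trans_lt hz.2.lt) (lt_irrefl x)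
  · set m := rk y - rk x with hm
    have hm1 : 1 ≤ m := by have := rk_lt hrk hlt; omega
    have h1 := chainCount_eq_sum_last hlt
    have h2 : ∀ w ∈ coaF x y, chainCount x w = Nat.factorial (m - 1) := by
      intro w hw
      rw [mem_coaF] at hw
      rw [hcc x w hw.1]
      congr 1
      have hw1 : rk y = rk w + 1 := hrk.2 w y hw.2
      have := rk_mono hrk hw.1
      omega
    rw [Finset.sum_congr rfl h2, Finset.sum_const, smul_eq_mul, hcc x y hxy, ← hm] at h1
    have hms : m = (m - 1) + 1 := by omega
    rw [hms, Nat.factorial_succ] at h1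
    have := Nat.eq_of_mul_eq_mul_right (Nat.factorial_pos (m - 1)) h1
    omega

lemma card_A (u : α) : (covF ⊥ u).card = rk u := by
  rw [card_covF hrk hcc bot_le, hrk.1, Nat.sub_zero]

end Counting

lemma A_mono {u v : α} (huv : u ≤ v) : covF (⊥ : α) u ⊆ covF ⊥ v := by
  intro a ha
  rw [mem_covF] at ha ⊢
  exact ⟨ha.1, ha.2.trans huv⟩

lemma coaF_anti {x x' t : α} (h : x' ≤ x) : coaF x t ⊆ coaF x' t := by
  intro w hw
  rw [mem_coaF] at hw ⊢
  exact ⟨h.trans hw.1, hw.2⟩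

end Rank

section Main

variable {α : Type*} [Fintype α] [PartialOrder α] [BoundedOrder α] {rk : α → ℕ} {n : ℕ}
  (hrk : IsRankFunction rk)
  (hcc : ∀ x y : α, x ≤ y → chainCount x y = Nat.factorial (rk y - rk x))

include hrk hcc

lemma coatom_unique {a t c₁ c₂ : α} (ha : (⊥ : α) ⋖ a) (hat : a ≤ t)
    (h1 : c₁ ⋖ t) (h2 : c₂ ⋖ t) (na1 : ¬ a ≤ c₁) (na2 : ¬ a ≤ c₂) : c₁ = c₂ := by
  have hra : rk a = 1 := by rw [hrk.2 ⊥ a ha, hrk.1]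
  have hsub : coaF a t ⊆ coaF ⊥ t := coaF_anti bot_le
  have hc1 : (coaF (⊥ : α) t).card = rk t := by
    rw [card_coaF hrk hcc bot_le, hrk.1, Nat.sub_zero]
  have hc2 : (coaF a t).card = rk t - 1 := by rw [card_coaF hrk hcc hat, hra]
  have hrt : 1 ≤ rk t := by rw [← hra]; exact rk_mono hrk hat
  have hdiff : (coaF (⊥ : α) t \ coaF a t).card = 1 := by
    rw [Finset.card_sdiff_of_subset hsub, hc1, hc2]; omega
  have m1 : c₁ ∈ coaF (⊥ : α) t \ coaF a t := by
    rw [Finset.mem_sdiff, mem_coaF, mem_coaF]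
    exact ⟨⟨bot_le, h1⟩, fun h => na1 h.1⟩
  have m2 : c₂ ∈ coaF (⊥ : α) t \ coaF a t := by
    rw [Finset.mem_sdiff, mem_coaF, mem_coaF]
    exact ⟨⟨bot_le, h2⟩, fun h => na2 h.1⟩
  exact Finset.card_le_one.1 hdiff.le c₁ m1 c₂ m2

lemma cov_insert {u z a : α} (huz : u ⋖ z) (ha : (⊥ : α) ⋖ a) (haz : a ≤ z)
    (hau : ¬ a ≤ u) : covF (⊥ : α) z = insert a (covF ⊥ u) := by
  have hnotmem : a ∉ covF (⊥ : α) u := fun h => hau (mem_covF.1 h).2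
  have hsub : insert a (covF (⊥ : α) u) ⊆ covF ⊥ z := by
    rw [Finset.insert_subset_iff]
    exact ⟨mem_covF.2 ⟨ha, haz⟩, A_mono huz.le⟩
  have hcard : (covF (⊥ : α) z).card ≤ (insert a (covF (⊥ : α) u)).card := by
    rw [Finset.card_insert_of_notMem hnotmem, card_A hrk hcc, card_A hrk hcc]
    exact le_of_eq (hrk.2 u z huz)
  exact (Finset.eq_of_subset_of_card_le hsub hcard).symm

lemma main_ind : ∀ r : ℕ, ∀ t : α, rk t ≤ r →
    (∀ x a, x ≤ t → (⊥ : α) ⋖ a → a ≤ t → ¬ a ≤ x → ∃ c, x ≤ c ∧ c ⋖ t ∧ ¬ a ≤ c) ∧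
    (∀ u v, u ≤ t → v ≤ t → covF (⊥ : α) u ⊆ covF ⊥ v → u ≤ v) := by
  intro r
  induction r using Nat.strong_induction_on with
  | _ r IH =>
  intro t ht
  rcases lt_or_eq_of_le ht with hlt | hrt
  · exact IH (rk t) hlt t le_rfl
  have KL : ∀ d : ℕ, ∀ x a : α, rk t - rk x ≤ d → x ≤ t → (⊥ : α) ⋖ a → a ≤ t →
      ¬ a ≤ x → ∃ c, x ≤ c ∧ c ⋖ t ∧ ¬ a ≤ c := by
    intro d
    induction d with
    | zero =>
      intro x a hd hxt ha hat hax
      have hx : x = t := eq_of_rk hrk hxt (by omega)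
      exact absurd (hx ▸ hat) hax
    | succ d ihd =>
      intro x a hd hxt ha hat hax
      have hxlt : x < t := lt_of_le_of_ne hxt (fun h => hax (h ▸ hat))
      by_cases hcov : rk t ≤ rk x + 1
      · exact ⟨x, le_rfl, covby_of_rk hrk hxlt hcov, hax⟩
      · by_cases hz : ∃ z ∈ covF x t, ¬ a ≤ z
        · obtain ⟨z, hzm, hza⟩ := hz
          rw [mem_covF] at hzm
          have hrz : rk z = rk x + 1 := hrk.2 x z hzm.1
          obtain ⟨c, hzc, hct, hac⟩ := ihd z a (by omega) hzm.2 ha hat hza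
          exact ⟨c, hzm.1.le.trans hzc, hct, hac⟩
        · exfalso
          push_neg at hz
          have hcard : (covF x t).card = rk t - rk x := card_covF hrk hcc hxt
          have h2le : 1 < (covF x t).card := by
            have := rk_lt hrk hxlt; omega
          obtain ⟨z₁, hm₁, z₂, hm₂, hne⟩ := Finset.one_lt_card.1 h2le
          have key : ∀ z ∈ covF x t, covF (⊥ : α) z = insert a (covF ⊥ x) := by
            intro z hzm
            have hmem := mem_covF.1 hzm
            exact cov_insert hrk hcc hmem.1 ha (hz z hzm) hax
          have hA12 : covF (⊥ : α) z₁ = covF ⊥ z₂ := by rw [key z₁ hm₁, key z₂ hm₂]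
          have hmem₁ := mem_covF.1 hm₁
          have hmem₂ := mem_covF.1 hm₂
          have hrz₁ : rk z₁ = rk x + 1 := hrk.2 x z₁ hmem₁.1
          have hrz₂ : rk z₂ = rk x + 1 := hrk.2 x z₂ hmem₂.1
          by_cases hco : ((coaF z₁ t) ∩ (coaF z₂ t)).Nonempty
          · obtain ⟨c, hcm⟩ := hco
            rw [Finset.mem_inter, mem_coaF, mem_coaF] at hcm
            have hct : c ⋖ t := hcm.1.2
            have hrc : rk t = rk c + 1 := hrk.2 c t hct
            have INJc := (IH (rk c) (by omega) c le_rfl).2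
            exact hne (le_antisymm
              (INJc z₁ z₂ hcm.1.1 hcm.2.1 (le_of_eq hA12))
              (INJc z₂ z₁ hcm.2.1 hcm.1.1 (le_of_eq hA12.symm)))
          · rw [Finset.not_nonempty_iff_eq_empty] at hco
            have hd₁ : (coaF z₁ t).card = rk t - rk x - 1 := by
              rw [card_coaF hrk hcc hmem₁.2]; omega
            have hd₂ : (coaF z₂ t).card = rk t - rk x - 1 := by
              rw [card_coaF hrk hcc hmem₂.2]; omega
            have hsubu : (coaF z₁ t) ∪ (coaF z₂ t) ⊆ coaF x t :=
              Finset.union_subset (coaF_anti hmem₁.1.le) (coaF_anti hmem₂.1.le)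
            have hcx : (coaF x t).card = rk t - rk x := card_coaF hrk hcc hxt
            have hcu : ((coaF z₁ t) ∪ (coaF z₂ t)).card
                = (rk t - rk x - 1) + (rk t - rk x - 1) := by
              rw [Finset.card_union_of_disjoint (Finset.disjoint_iff_inter_eq_empty.2 hco),
                hd₁, hd₂]
            have hle := Finset.card_le_card hsubu
            rw [hcu, hcx] at hle
            have hxr := rk_lt hrk hxlt
            have hz₁t : z₁ ⋖ t := covby_of_rk hrk
              (lt_of_le_of_ne hmem₁.2 (fun h => by rw [h] at hrz₁; omega)) (by omega)
            have hz₂t : z₂ ⋖ t := covby_of_rk hrk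
              (lt_of_le_of_ne hmem₂.2 (fun h => by rw [h] at hrz₂; omega)) (by omega)
            have hsz : covF (⊥ : α) z₁ ⊆ covF ⊥ t := A_mono hmem₁.2
            have hcz : (covF (⊥ : α) z₁).card = rk x + 1 := by
              rw [card_A hrk hcc, hrz₁]
            have hctc : (covF (⊥ : α) t).card = rk t := card_A hrk hcc t
            have hdnonempty : (covF (⊥ : α) t \ covF ⊥ z₁).Nonempty := by
              rw [← Finset.card_pos, Finset.card_sdiff_of_subset hsz, hcz, hctc]; omega
            obtain ⟨a', ha'⟩ := hdnonempty
            rw [Finset.mem_sdiff] at ha'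
            have ha'm := mem_covF.1 ha'.1
            have ha'z₁ : ¬ a' ≤ z₁ := fun h => ha'.2 (mem_covF.2 ⟨ha'm.1, h⟩)
            have ha'z₂ : ¬ a' ≤ z₂ := fun h => ha'.2 (by
              rw [hA12]; exact mem_covF.2 ⟨ha'm.1, h⟩)
            exact hne (coatom_unique hrk hcc ha'm.1 ha'm.2 hz₁t hz₂t ha'z₁ ha'z₂)
  refine ⟨fun x a hxt ha hat hax => KL (rk t) x a (by omega) hxt ha hat hax, ?_⟩
  intro u v hut hvt hAuv
  by_cases hvt' : rk t ≤ rk v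
  · have hv : v = t := eq_of_rk hrk hvt hvt'
    exact hv ▸ hut
  · have hsubA : covF (⊥ : α) v ⊆ covF ⊥ t := A_mono hvt
    have h1 : (covF (⊥ : α) v).card = rk v := card_A hrk hcc v
    have h2 : (covF (⊥ : α) t).card = rk t := card_A hrk hcc t
    have hdn : (covF (⊥ : α) t \ covF ⊥ v).Nonempty := by
      rw [← Finset.card_pos, Finset.card_sdiff_of_subset hsubA, h1, h2]; omega
    obtain ⟨a, ha⟩ := hdn
    rw [Finset.mem_sdiff] at ha
    have ham := mem_covF.1 ha.1
    have hav : ¬ a ≤ v := fun h => ha.2 (mem_covF.2 ⟨ham.1, h⟩)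
    have hau : ¬ a ≤ u := fun h => hav ((mem_covF.1 (hAuv (mem_covF.2 ⟨ham.1, h⟩))).2)
    obtain ⟨cu, hucu, hcut, hacu⟩ := KL (rk t) u a (by omega) hut ham.1 ham.2 hau
    obtain ⟨cv, hvcv, hcvt, hacv⟩ := KL (rk t) v a (by omega) hvt ham.1 ham.2 hav
    have hceq : cu = cv := coatom_unique hrk hcc ham.1 ham.2 hcut hcvt hacu hacv
    subst hceq
    have hrc : rk t = rk cu + 1 := hrk.2 cu t hcut
    exact (IH (rk cu) (by omega) cu le_rfl).2 u v hucu hvcv hAuv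

lemma surj (hrank : rk (⊤ : α) = n) :
    ∀ s : Finset α, s ⊆ covF ⊥ (⊤ : α) → ∃ u : α, covF ⊥ u = s := by
  classical
  intro s
  induction s using Finset.induction_on with
  | empty =>
    intro _
    refine ⟨⊥, ?_⟩
    rw [Finset.eq_empty_iff_forall_notMem]
    intro z hz
    have hzm := mem_covF.1 hz
    exact absurd (hzm.2.trans_lt hzm.1.lt) (lt_irrefl z)
  | @insert a s hna ihs =>
    intro hsub
    obtain ⟨u, hu⟩ := ihs (fun w hw => hsub (Finset.mem_insert_of_mem hw))
    have haA := mem_covF.1 (hsub (Finset.mem_insert_self a s))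
    have ha : (⊥ : α) ⋖ a := haA.1
    have hau : ¬ a ≤ u := fun h => hna (hu ▸ mem_covF.2 ⟨ha, h⟩)
    have hKL := (main_ind hrk hcc n ⊤ (le_of_eq hrank)).1
    obtain ⟨c, huc, hct, hac⟩ := hKL u a le_top ha le_top hau
    have hrc : n = rk c + 1 := by rw [← hrank]; exact hrk.2 c ⊤ hct
    have hun : rk u < n := by
      have hune : u ≠ ⊤ := fun h => hau (by rw [h]; exact le_top)
      have := rk_lt hrk (lt_of_le_of_ne le_top hune)
      rw [hrank] at this
      exact this
    have hzex : ∃ z ∈ covF u (⊤ : α), a ≤ z := by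
      by_contra hno
      push_neg at hno
      have hsub2 : covF u (⊤ : α) ⊆ covF u c := by
        intro z hz
        have hzm := mem_covF.1 hz
        obtain ⟨c', hzc', hc't, hac'⟩ := hKL z a le_top ha le_top (hno z hz)
        have hc'c : c' = c := coatom_unique hrk hcc ha le_top hc't hct hac' hac
        exact mem_covF.2 ⟨hzm.1, hc'c ▸ hzc'⟩
      have hc1 : (covF u (⊤ : α)).card = n - rk u := by
        rw [card_covF hrk hcc le_top, hrank]
      have hc2 : (covF u c).card = rk c - rk u := card_covF hrk hcc huc
      have := Finset.card_le_card hsub2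
      omega
    obtain ⟨z, hzm, haz⟩ := hzex
    have hzmem := mem_covF.1 hzm
    refine ⟨z, ?_⟩
    rw [cov_insert hrk hcc hzmem.1 ha haz hau, hu]

lemma master (hrank : rk (⊤ : α) = n) : Nonempty (α ≃o Finset (Fin n)) := by
  classical
  have hINJ : ∀ u v : α, covF (⊥ : α) u ⊆ covF ⊥ v → u ≤ v :=
    fun u v h => (main_ind hrk hcc n ⊤ (le_of_eq hrank)).2 u v le_top le_top h
  have hcardA : (covF (⊥ : α) (⊤ : α)).card = n := by rw [card_A hrk hcc, hrank]
  let e0 : {a // a ∈ covF (⊥ : α) (⊤ : α)} ≃ Fin n :=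
    Fintype.equivFinOfCardEq (by rw [Fintype.card_coe, hcardA])
  let F : α → Finset (Fin n) := fun u =>
    ((covF (⊥ : α) (⊤ : α)).attach.filter fun a => a.1 ≤ u).image e0
  have hmemF : ∀ (u : α) (i : Fin n), i ∈ F u ↔ ((e0.symm i : α) ≤ u) := by
    intro u i
    simp only [F, Finset.mem_image, Finset.mem_filter, Finset.mem_attach, true_and]
    constructor
    · rintro ⟨b, hb, rfl⟩
      rwa [Equiv.symm_apply_apply]
    · intro h
      exact ⟨e0.symm i, h, Equiv.apply_symm_apply _ _⟩
  have hAF : ∀ u v : α, F u ⊆ F v → covF (⊥ : α) u ⊆ covF ⊥ v := by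
    intro u v h x hx
    have hxm := mem_covF.1 hx
    have hxT : x ∈ covF (⊥ : α) (⊤ : α) := mem_covF.2 ⟨hxm.1, le_top⟩
    have h1 : e0 ⟨x, hxT⟩ ∈ F u := by
      rw [hmemF, Equiv.symm_apply_apply]
      exact hxm.2
    have h2 := h h1
    rw [hmemF, Equiv.symm_apply_apply] at h2
    exact mem_covF.2 ⟨hxm.1, h2⟩
  have hFmono : ∀ {u v : α}, u ≤ v → F u ⊆ F v := by
    intro u v huv i hi
    rw [hmemF] at hi ⊢
    exact hi.trans huv
  have hFle : ∀ u v : α, F u ⊆ F v ↔ u ≤ v :=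
    fun u v => ⟨fun h => hINJ u v (hAF u v h), fun h => hFmono h⟩
  have hFinj : Function.Injective F := fun u v h =>
    le_antisymm ((hFle u v).1 (le_of_eq h)) ((hFle v u).1 (le_of_eq h.symm))
  have hFsurj : Function.Surjective F := by
    intro s
    obtain ⟨u, hu⟩ := surj hrk hcc hrank
      ((covF (⊥ : α) (⊤ : α)).filter
        fun x => ∀ hx : x ∈ covF (⊥ : α) (⊤ : α), e0 ⟨x, hx⟩ ∈ s)
      (Finset.filter_subset _ _)
    refine ⟨u, ?_⟩
    ext i
    rw [hmemF]
    have hmi : (e0.symm i : α) ∈ covF (⊥ : α) (⊤ : α) := (e0.symm i).2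
    constructor
    · intro h
      have hmem : (e0.symm i : α) ∈ covF (⊥ : α) u :=
        mem_covF.2 ⟨(mem_covF.1 hmi).1, h⟩
      rw [hu, Finset.mem_filter] at hmem
      have h3 := hmem.2 hmi
      have heq : (⟨(e0.symm i : α), hmi⟩ : {a // a ∈ covF (⊥ : α) (⊤ : α)}) = e0.symm i :=
        Subtype.ext rfl
      rwa [heq, Equiv.apply_symm_apply] at h3
    · intro h
      have hmem : (e0.symm i : α) ∈ covF (⊥ : α) u := by
        rw [hu, Finset.mem_filter]
        refine ⟨hmi, fun hx => ?_⟩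
        have heq : (⟨(e0.symm i : α), hx⟩ : {a // a ∈ covF (⊥ : α) (⊤ : α)}) = e0.symm i :=
          Subtype.ext rfl
        rw [heq, Equiv.apply_symm_apply]
        exact h
      exact (mem_covF.1 hmem).2
  exact ⟨{ toEquiv := Equiv.ofBijective F ⟨hFinj, hFsurj⟩,
           map_rel_iff' := fun {u v} => hFle u v }⟩

end Main

end Statement4Aux


/-- An Eulerian binomial poset of rank `n` with `B k = k!` is isomorphic to
the boolean lattice `B_n`. -/
theorem statement4 {α : Type*} [Fintype α] [PartialOrder α] [BoundedOrder α]
    (rk : α → ℕ) (B : ℕ → ℕ) (n : ℕ) (hrk : IsRankFunction rk) (hB : IsBinomial rk B)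
    (hE : IsEulerian rk) (hrank : rk ⊤ = n)
    (hfact : ∀ k, 1 ≤ k → k ≤ n → B k = Nat.factorial k) :
    Nonempty (α ≃o Finset (Fin n)) := by
  classical
  have hcc : ∀ x y : α, x ≤ y → chainCount x y = Nat.factorial (rk y - rk x) :=
    fun x y hxy => Statement4Aux.cc_fact hrk hrank hB hfact hxy
  exact Statement4Aux.master hrk hcc hrank
end
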